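/- arXiv:math/0605673 — 4 statements merged into one kernel-verified Lean document; each statement's English description precedes it below -/
import Mathlib

section
/- Let C be a simplicial complex and let m = c_k(C) = C(n_k, k) + C(n_{k-1}, k-1) + ... + C(n_{k-s}, k-s) be the k-canonical representation of m (i.e., n_k > n_{k-1} > ... > n_{k-s} ≥ k-s > 0). Then c_{k+1}(C) ≤ C(n_k, k+1) + C(n_{k-1}, k) + ... + C(n_{k-s}, k-s+1). -/
attribute [-instance] instDecidableEqFin

open Finset Finset.Colex

lemma card_initSeg_image {n : ℕ} : ∀ {r : ℕ} (g : Fin r → Fin n), StrictMono g →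
    (initSeg (Finset.univ.image g)).card = 1 + ∑ j : Fin r, Nat.choose (g j) ((j : ℕ) + 1) := by
  intro r
  induction r with
  | zero =>
      intro g hg
      have h1 : (Finset.univ.image g) = (∅ : Finset (Fin n)) := by simp
      rw [h1]
      have : initSeg (∅ : Finset (Fin n)) = {∅} := by
        ext t
        simp [mem_initSeg, eq_comm, Finset.card_eq_zero]
        intro h
        simp [h]
      simp [this]
  | succ r ih =>
      intro g hg
      set a : Fin n := g (Fin.last r) with ha
      set A : Finset (Fin n) := Finset.univ.image g with hA
      have hginj : Function.Injective g := hg.injective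
      have hcardA : A.card = r + 1 := by
        rw [hA, Finset.card_image_of_injective _ hginj, Finset.card_univ, Fintype.card_fin]
      have haA : a ∈ A := by simp [hA, ha]
      have hAins : A = insert a (Finset.univ.image (g ∘ Fin.castSucc)) := by
        ext x
        simp only [hA, Finset.mem_image, Finset.mem_univ, true_and, Finset.mem_insert,
          Function.comp_apply]
        constructor
        · rintro ⟨j, rfl⟩
          rcases Fin.eq_castSucc_or_eq_last j with ⟨j', rfl⟩ | rfl
          · exact Or.inr ⟨j', rfl⟩
          · exact Or.inl rfl
        · rintro (rfl | ⟨j, rfl⟩)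
          · exact ⟨Fin.last r, rfl⟩
          · exact ⟨j.castSucc, rfl⟩
      have hanotin : a ∉ Finset.univ.image (g ∘ Fin.castSucc) := by
        simp only [Finset.mem_image, Finset.mem_univ, true_and, Function.comp_apply, not_exists]
        intro j h
        have h2 := congrArg Fin.val (hginj h)
        simp only [Fin.coe_castSucc, Fin.val_last] at h2
        omega
      have herase : A.erase a = Finset.univ.image (g ∘ Fin.castSucc) := by
        rw [hAins, Finset.erase_insert hanotin]
      have hlt : ∀ x ∈ A.erase a, x < a := by
        rw [herase]
        rintro x hx
        simp only [Finset.mem_image, Finset.mem_univ, true_and, Function.comp_apply] at hx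
        obtain ⟨j, rfl⟩ := hx
        exact hg (Fin.castSucc_lt_last j)
      have hle : ∀ x ∈ A, x ≤ a := by
        intro x hx
        by_cases h : x = a
        · exact h.le
        · exact (hlt x (Finset.mem_erase.mpr ⟨h, hx⟩)).le
      have hpart : initSeg A =
          (Finset.Iio a).powersetCard (r + 1) ∪ (initSeg (A.erase a)).image (insert a) := by
        ext t
        simp only [mem_initSeg, Finset.mem_union, Finset.mem_powersetCard, Finset.mem_image]
        constructor
        · rintro ⟨hcard, hcolex⟩
          by_cases hat : a ∈ t
          · right
            refine ⟨t.erase a, ⟨?_, ?_⟩, ?_⟩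
            · have e1 : (t.erase a).card = t.card - 1 := Finset.card_erase_of_mem hat
              have e2 : (A.erase a).card = A.card - 1 := Finset.card_erase_of_mem haA
              omega
            · have h1 : t.erase a = t \ {a} := (Finset.sdiff_singleton_eq_erase a t).symm
              have h2 : A.erase a = A \ {a} := (Finset.sdiff_singleton_eq_erase a A).symm
              rw [h1, h2]
              exact (toColex_sdiff_le_toColex_sdiff (by simpa using hat) (by simpa using haA)).mpr
                hcolex
            · exact Finset.insert_erase hat
          · left
            refine ⟨fun x hx => ?_, by omega⟩
            have hxa := forall_le_mono hcolex hle x hx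
            rcases hxa.lt_or_eq with h | h
            · simpa using h
            · exact absurd (h ▸ hx) hat
        · rintro (⟨hsub, hcard⟩ | ⟨t', ⟨hcard', hcolex'⟩, rfl⟩)
          · have hat : a ∉ t := fun h => lt_irrefl a (by simpa using hsub h)
            have hne : t ≠ A := fun h => hat (h ▸ haA)
            refine ⟨by omega, ?_⟩
            refine le_of_lt (toColex_lt_toColex_iff_max'_mem.mpr ⟨hne, ?_⟩)
            generalize_proofs hpf
            set M := (symmDiff t A).max' hpf with hM
            have hmax : M ∈ symmDiff t A := Finset.max'_mem _ _
            have hMa : M ≤ a := by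
              rcases Finset.mem_symmDiff.mp hmax with ⟨h1, _⟩ | ⟨h1, _⟩
              · exact (by simpa using hsub h1 : M < a).le
              · exact hle _ h1
            have haM : a ≤ M := Finset.le_max' _ a (Finset.mem_symmDiff.mpr (Or.inr ⟨haA, hat⟩))
            have hMA : M = a := le_antisymm hMa haM
            rw [hMA]
            exact haA
          · have hat' : a ∉ t' := fun h =>
              lt_irrefl a (forall_lt_mono hcolex' hlt a h)
            refine ⟨?_, ?_⟩
            · have e1 : (insert a t').card = t'.card + 1 := Finset.card_insert_of_notMem hat'
              have e2 : (A.erase a).card = A.card - 1 := Finset.card_erase_of_mem haA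
              omega
            · refine (toColex_sdiff_le_toColex_sdiff
                (show {a} ⊆ insert a t' by simp)
                (show {a} ⊆ A by simpa using haA)).mp ?_
              have h1 : insert a t' \ {a} = t' := by
                rw [Finset.sdiff_singleton_eq_erase, Finset.erase_insert hat']
              have h2 : A \ {a} = A.erase a := Finset.sdiff_singleton_eq_erase a A
              rw [h1, h2]
              exact hcolex'
      have hdisj : Disjoint ((Finset.Iio a).powersetCard (r + 1))
          ((initSeg (A.erase a)).image (insert a)) := by
        rw [Finset.disjoint_left]
        rintro t ht1 ht2
        rw [Finset.mem_powersetCard] at ht1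
        rw [Finset.mem_image] at ht2
        obtain ⟨t', _, rfl⟩ := ht2
        exact lt_irrefl a (by simpa using ht1.1 (Finset.mem_insert_self a t'))
      have hnomem : ∀ t' ∈ initSeg (A.erase a), a ∉ t' := by
        intro t' ht'
        rw [mem_initSeg] at ht'
        exact fun h => lt_irrefl a (forall_lt_mono ht'.2 hlt a h)
      have hinj : Set.InjOn (insert a) ((initSeg (A.erase a) : Finset (Finset (Fin n))) : Set (Finset (Fin n))) := by
        intro x hx y hy hxy
        have hax := hnomem x (by simpa using hx)
        have hay := hnomem y (by simpa using hy)
        rw [← Finset.erase_insert hax, ← Finset.erase_insert hay, hxy]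
      rw [hpart, Finset.card_union_of_disjoint hdisj, Finset.card_powersetCard,
        Fin.card_Iio, Finset.card_image_of_injOn hinj, herase,
        ih (g ∘ Fin.castSucc) (hg.comp Fin.strictMono_castSucc), Fin.sum_univ_castSucc]
      simp only [Function.comp_apply, Fin.coe_castSucc, Fin.val_last, ha]
      omega

open scoped FinsetFamily

/-- Kruskal–Katona bound: if `C` is a simplicial complex (on a vertex set `V`) and
`c_k(C) = C(n_k, k) + C(n_{k-1}, k-1) + ⋯ + C(n_{k-s}, k-s)` is the `k`-canonical
representation (encoded by `f : Fin (s+1) → ℕ`, `f i = n_{k-i}`, strictly decreasing,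
with `n_{k-s} ≥ k - s > 0`), then
`c_{k+1}(C) ≤ C(n_k, k+1) + C(n_{k-1}, k) + ⋯ + C(n_{k-s}, k-s+1)`. -/
theorem kruskal_katona_bound {V : Type*} [DecidableEq V] (C : Finset (Finset V))
    (hempty : ∅ ∈ C) (hsingle : ∀ v : V, {v} ∈ C)
    (hdown : ∀ s ∈ C, ∀ t ⊆ s, t ∈ C)
    (k s : ℕ) (f : Fin (s + 1) → ℕ)
    (hsk : s < k)
    (hanti : ∀ i j : Fin (s + 1), i < j → f j < f i)
    (hlast : k - s ≤ f (Fin.last s))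
    (hrep : (C.filter fun t => t.card = k).card
        = ∑ i : Fin (s + 1), Nat.choose (f i) (k - (i : ℕ))) :
    (C.filter fun t => t.card = k + 1).card
      ≤ ∑ i : Fin (s + 1), Nat.choose (f i) (k - (i : ℕ) + 1) := by
  classical
  by_contra hcon
  have hcon : (∑ i : Fin (s + 1), Nat.choose (f i) (k - (i : ℕ) + 1))
      < (C.filter fun t => t.card = k + 1).card := lt_of_not_ge hcon
  set m := ∑ i : Fin (s + 1), Nat.choose (f i) (k - (i : ℕ)) with hm
  set N := ∑ i : Fin (s + 1), Nat.choose (f i) (k - (i : ℕ) + 1) with hN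
  set B := C.filter (fun t => t.card = k + 1) with hB
  set W := B.sup id with hW
  set n := W.card + f 0 + k + 2 with hn
  -- basic facts about f
  have hf0 : ∀ i : Fin (s+1), f i ≤ f 0 := by
    intro i
    rcases eq_or_lt_of_le (Fin.zero_le i) with h | h
    · rw [← h]
    · exact (hanti 0 i h).le
  have hflast : ∀ i : Fin (s+1), f (Fin.last s) ≤ f i := by
    intro i
    rcases eq_or_lt_of_le (Fin.le_last i) with h | h
    · rw [h]
    · exact (hanti i (Fin.last s) h).le
  -- the ℕ-valued enumeration function of the canonical colex set
  set valg : ℕ → ℕ := fun j => if j < k - s then j else f ⟨s - (j - (k - s)), by omega⟩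
    with hvalg
  have hvalg_lt : ∀ j, valg j < n := by
    intro j
    rw [hvalg]
    dsimp only
    split
    · omega
    · have := hf0 ⟨s - (j - (k - s)), by omega⟩
      omega
  have hvalg_mono : ∀ j1 j2, j1 < j2 → j2 ≤ k → valg j1 < valg j2 := by
    intro j1 j2 h12 h2k
    rw [hvalg]
    dsimp only
    split <;> split
    · omega
    · rename_i h1 h2
      have := hflast ⟨s - (j2 - (k - s)), by omega⟩
      omega
    · omega
    · rename_i h1 h2
      have hidx : s - (j2 - (k - s)) < s - (j1 - (k - s)) := by omega
      exact hanti _ _ hidx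
  set g : Fin (k+1) → Fin n := fun j => ⟨valg j, hvalg_lt j⟩ with hg
  have hgmono : StrictMono g := by
    intro j1 j2 h
    rw [hg]
    exact Fin.mk_lt_mk.mpr (hvalg_mono j1 j2 h (by omega))
  set g2 : Fin k → Fin n := fun j => g j.succ with hg2
  have hg2mono : StrictMono g2 := fun j1 j2 h => hgmono (Fin.succ_lt_succ_iff.mpr h)
  -- sum computations
  set F : ℕ → ℕ := fun i' => Nat.choose (f ⟨min i' s, by omega⟩) (k - i' + 1) with hF
  set G : ℕ → ℕ := fun i' => Nat.choose (f ⟨min i' s, by omega⟩) (k - i') with hG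
  have hsum1 : ∑ j : Fin (k+1), Nat.choose (g j : ℕ) ((j : ℕ) + 1) = N := by
    have e1 : ∑ j : Fin (k+1), Nat.choose (g j : ℕ) ((j : ℕ) + 1)
        = ∑ j ∈ Finset.range (k+1), Nat.choose (valg j) (j + 1) :=
      Fin.sum_univ_eq_sum_range (fun j => Nat.choose (valg j) (j+1)) (k+1)
    have e2 : ∑ j ∈ Finset.range (k - s), Nat.choose (valg j) (j + 1) = 0 := by
      apply Finset.sum_eq_zero
      intro j hj
      rw [Finset.mem_range] at hj
      have hv : valg j = j := by rw [hvalg]; exact if_pos hj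
      rw [hv]
      exact Nat.choose_eq_zero_of_lt (by omega)
    have e3 : ∀ i ∈ Finset.range (s+1),
        Nat.choose (valg ((k-s)+i)) ((k-s)+i+1) = F (s - i) := by
      intro i hi
      rw [Finset.mem_range] at hi
      have hv : valg ((k-s)+i) = f ⟨s - (((k-s)+i) - (k - s)), by omega⟩ := by
        rw [hvalg]; exact if_neg (by omega)
      rw [hv, hF]
      dsimp only
      have hidx : (⟨s - (((k-s)+i) - (k - s)), by omega⟩ : Fin (s+1))
          = ⟨min (s - i) s, by omega⟩ :=
        Fin.mk_eq_mk.mpr (by omega)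
      rw [hidx]
      congr 1
      omega
    have e4 : N = ∑ j ∈ Finset.range (s+1), F j := by
      rw [hN, ← Fin.sum_univ_eq_sum_range F (s+1)]
      apply Finset.sum_congr rfl
      intro i _
      have hidx : (⟨min (i : ℕ) s, by omega⟩ : Fin (s+1)) = i := by
        have hi' := i.isLt
        apply Fin.ext
        simp only [Fin.val_mk]
        omega
      rw [hF]
      dsimp only
      rw [hidx]
    have e5 : ∑ i ∈ Finset.range (s+1), F (s - i) = ∑ i ∈ Finset.range (s+1), F i := by
      rw [← Finset.sum_range_reflect F (s+1)]
      simp only [Nat.add_sub_cancel]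
    rw [e1, show k + 1 = (k - s) + (s + 1) by omega, Finset.sum_range_add, e2,
      Finset.sum_congr rfl e3, e5, e4, zero_add]
  have hsum2 : ∑ j : Fin k, Nat.choose (g2 j : ℕ) ((j : ℕ) + 1) = m + (k - s - 1) := by
    have e1 : ∑ j : Fin k, Nat.choose (g2 j : ℕ) ((j : ℕ) + 1)
        = ∑ j ∈ Finset.range k, Nat.choose (valg (j+1)) (j + 1) :=
      Fin.sum_univ_eq_sum_range (fun j => Nat.choose (valg (j+1)) (j+1)) k
    have e2 : ∑ j ∈ Finset.range (k - s - 1), Nat.choose (valg (j+1)) (j + 1)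
        = k - s - 1 := by
      rw [Finset.sum_congr rfl (g := fun _ => 1) (fun j hj => by
        rw [Finset.mem_range] at hj
        have hv : valg (j+1) = j+1 := by rw [hvalg]; exact if_pos (by omega)
        rw [hv, Nat.choose_self])]
      simp
    have e3 : ∀ i ∈ Finset.range (s+1),
        Nat.choose (valg ((k-s-1)+i+1)) ((k-s-1)+i+1) = G (s - i) := by
      intro i hi
      rw [Finset.mem_range] at hi
      have hv : valg ((k-s-1)+i+1) = f ⟨s - (((k-s-1)+i+1) - (k - s)), by omega⟩ := by
        rw [hvalg]; exact if_neg (by omega)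
      rw [hv, hG]
      dsimp only
      have hidx : (⟨s - (((k-s-1)+i+1) - (k - s)), by omega⟩ : Fin (s+1))
          = ⟨min (s - i) s, by omega⟩ :=
        Fin.mk_eq_mk.mpr (by omega)
      rw [hidx]
      congr 1
      omega
    have e4 : m = ∑ j ∈ Finset.range (s+1), G j := by
      rw [hm, ← Fin.sum_univ_eq_sum_range G (s+1)]
      apply Finset.sum_congr rfl
      intro i _
      have hidx : (⟨min (i : ℕ) s, by omega⟩ : Fin (s+1)) = i := by
        have hi' := i.isLt
        apply Fin.ext
        simp only [Fin.val_mk]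
        omega
      rw [hG]
      dsimp only
      rw [hidx]
    have e5 : ∑ i ∈ Finset.range (s+1), G (s - i) = ∑ i ∈ Finset.range (s+1), G i := by
      rw [← Finset.sum_range_reflect G (s+1)]
      simp only [Nat.add_sub_cancel]
    have e6 : ∀ i ∈ Finset.range (s+1),
        Nat.choose (valg ((k-s-1)+i+1)) ((k-s-1)+i+1)
          = (fun j => Nat.choose (valg (j+1)) (j+1)) ((k-s-1)+i) := by
      intro i _; rfl
    rw [e1, show k = (k - s - 1) + (s + 1) by omega, Finset.sum_range_add, e2,
      Finset.sum_congr rfl (fun i hi => ((e6 i hi).symm.trans (e3 i hi))), e5, ← e4]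
    omega
  -- set up the Fin n family
  have hnW : W.card ≤ n := by omega
  set φ : V → Fin n := fun v => if h : v ∈ W then Fin.castLE hnW (W.equivFin ⟨v, h⟩)
    else ⟨0, by omega⟩ with hφ
  have hφinj : Set.InjOn φ ↑W := by
    intro x hx y hy hxy
    simp only [Finset.mem_coe] at hx hy
    simp only [hφ, dif_pos hx, dif_pos hy] at hxy
    have := W.equivFin.injective (Fin.castLE_injective hnW hxy)
    exact congrArg Subtype.val this
  have htW : ∀ t ∈ B, t ⊆ W := by
    intro t ht
    exact Finset.le_sup (f := id) ht
  have himinj : ∀ t1 ⊆ W, ∀ t2 ⊆ W, t1.image φ = t2.image φ → t1 = t2 := by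
    intro t1 h1 t2 h2 h
    ext x
    constructor
    · intro hx
      have : φ x ∈ t2.image φ := h ▸ Finset.mem_image_of_mem φ hx
      obtain ⟨y, hy, hxy⟩ := Finset.mem_image.mp this
      rwa [← hφinj (h2 hy) (h1 hx) hxy]
    · intro hx
      have : φ x ∈ t1.image φ := h.symm ▸ Finset.mem_image_of_mem φ hx
      obtain ⟨y, hy, hxy⟩ := Finset.mem_image.mp this
      rwa [← hφinj (h1 hy) (h2 hx) hxy]
  set 𝒜 : Finset (Finset (Fin n)) := B.image (fun t => t.image φ) with h𝒜
  have h𝒜r : (𝒜 : Set (Finset (Fin n))).Sized (k+1) := by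
    intro a ha
    rw [h𝒜, Finset.coe_image, Set.mem_image] at ha
    obtain ⟨t, ht, rfl⟩ := ha
    rw [Finset.mem_coe, hB, Finset.mem_filter] at ht
    rw [Finset.card_image_of_injOn (hφinj.mono (by exact_mod_cast htW t (by
      rw [hB, Finset.mem_filter]; exact ht)))]
    exact ht.2
  have h𝒜card : 𝒜.card = B.card := by
    rw [h𝒜]
    apply Finset.card_image_of_injOn
    intro t1 h1 t2 h2 h
    exact himinj t1 (htW t1 h1) t2 (htW t2 h2) h
  -- the initial segment
  set u : Finset (Fin n) := Finset.univ.image g with hu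
  have hucard : u.card = k + 1 := by
    rw [hu, Finset.card_image_of_injective _ hgmono.injective, Finset.card_univ,
      Fintype.card_fin]
  have hCcard : (initSeg u).card = N + 1 := by
    rw [hu, card_initSeg_image g hgmono, hsum1]
    omega
  have hCinit : IsInitSeg (initSeg u) (k + 1) := hucard ▸ isInitSeg_initSeg
  have h𝒞𝒜 : (initSeg u).card ≤ 𝒜.card := by
    rw [hCcard, h𝒜card]
    omega
  -- Kruskal-Katona
  have hkk := Finset.kruskal_katona h𝒜r h𝒞𝒜 hCinit
  -- shadow of the initial segment
  have hune : u.Nonempty := ⟨g 0, by rw [hu]; exact Finset.mem_image_of_mem g (Finset.mem_univ 0)⟩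
  have humin : u.min' hune = g 0 := by
    apply le_antisymm
    · exact Finset.min'_le _ _ (by rw [hu]; exact Finset.mem_image_of_mem g (Finset.mem_univ 0))
    · apply Finset.le_min'
      intro y hy
      rw [hu, Finset.mem_image] at hy
      obtain ⟨j, _, rfl⟩ := hy
      exact hgmono.monotone (Fin.zero_le j)
  have huerase : u.erase (u.min' hune) = Finset.univ.image g2 := by
    have hins : u = insert (g 0) (Finset.univ.image g2) := by
      ext x
      simp only [hu, Finset.mem_image, Finset.mem_univ, true_and, Finset.mem_insert]
      constructor
      · rintro ⟨j, rfl⟩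
        rcases Fin.eq_zero_or_eq_succ j with rfl | ⟨j', rfl⟩
        · exact Or.inl rfl
        · exact Or.inr ⟨j', rfl⟩
      · rintro (rfl | ⟨j, rfl⟩)
        · exact ⟨0, rfl⟩
        · exact ⟨j.succ, rfl⟩
    have hnotin : g 0 ∉ Finset.univ.image g2 := by
      simp only [Finset.mem_image, Finset.mem_univ, true_and, not_exists]
      intro j h
      exact Fin.succ_ne_zero j (hgmono.injective h)
    rw [humin, hins, Finset.erase_insert hnotin]
  have hshadow : #(∂ (initSeg u)) = m + (k - s) := by
    rw [shadow_initSeg hune, huerase, card_initSeg_image g2 hg2mono, hsum2]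
    omega
  -- shadow of 𝒜 is small
  have hshadow𝒜 : #(∂ 𝒜) ≤ m := by
    have hsub : ∂ 𝒜 ⊆ ((C.filter fun t => t.card = k).filter (· ⊆ W)).image
        (fun t => t.image φ) := by
      intro e he
      rw [Finset.mem_shadow_iff] at he
      obtain ⟨a, ha, y, hy, rfl⟩ := he
      rw [h𝒜, Finset.mem_image] at ha
      obtain ⟨t, htB, rfl⟩ := ha
      obtain ⟨x, hxt, rfl⟩ := Finset.mem_image.mp hy
      have htsub := htW t htB
      have himerase : (t.image φ).erase (φ x) = (t.erase x).image φ := by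
        ext z
        simp only [Finset.mem_erase, Finset.mem_image]
        constructor
        · rintro ⟨hz, w, hwt, rfl⟩
          exact ⟨w, ⟨fun hwx => hz (by rw [hwx]), hwt⟩, rfl⟩
        · rintro ⟨w, ⟨hwx, hwt⟩, rfl⟩
          exact ⟨fun h => hwx (hφinj (htsub hwt) (htsub hxt) h), w, hwt, rfl⟩
      rw [himerase]
      apply Finset.mem_image_of_mem
      rw [Finset.mem_filter, Finset.mem_filter]
      have htC : t ∈ C := (Finset.mem_filter.mp htB).1
      have htcard : t.card = k + 1 := (Finset.mem_filter.mp htB).2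
      have hec : (t.erase x).card = k := by
        rw [Finset.card_erase_of_mem hxt, htcard]
        omega
      exact ⟨⟨hdown t htC _ (Finset.erase_subset x t), hec⟩,
        (Finset.erase_subset x t).trans htsub⟩
    calc #(∂ 𝒜) ≤ #(((C.filter fun t => t.card = k).filter (· ⊆ W)).image
          (fun t => t.image φ)) := Finset.card_le_card hsub
      _ ≤ #((C.filter fun t => t.card = k).filter (· ⊆ W)) := Finset.card_image_le
      _ ≤ #(C.filter fun t => t.card = k) := Finset.card_le_card (Finset.filter_subset _ _)
      _ = m := hrep
  rw [hshadow] at hkk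
  have : k - s ≥ 1 := by omega
  omega
end

section
/- Given a vector (1, c_1, c_2, ..., c_t) of positive integers such that for every 1 ≤ k < t, writing c_k = C(n_k, k) + C(n_{k-1}, k-1) + ... + C(n_{k-s}, k-s) in its k-canonical representation, one has c_{k+1} ≤ C(n_k, k+1) + C(n_{k-1}, k) + ... + C(n_{k-s}, k-s+1), there exists a simplicial complex C with c_i(C) = c_i for all 0 ≤ i ≤ t. -/
/-- A family of finsets of `Fin n` is a simplicial complex on the vertex set `Fin n` if it
contains the empty set, all singletons, and is closed under taking subsets. -/
def IsSimplicialComplex {n : ℕ} (C : Finset (Finset (Fin n))) : Prop :=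
  ∅ ∈ C ∧ (∀ v : Fin n, {v} ∈ C) ∧ ∀ s ∈ C, ∀ t ⊆ s, t ∈ C

/-- The `i`-th face number of a complex: the number of faces with exactly `i` vertices. -/
def faceCount {n : ℕ} (C : Finset (Finset (Fin n))) (i : ℕ) : ℕ :=
  (C.filter fun s => s.card = i).card

open Finset Finset.Colex

/-- Sum bound: a strictly decreasing sequence with head `< m` gives sum of binomials `≤ C(m,r)`. -/
lemma kk_sum_le : ∀ (s : ℕ) (r m : ℕ) (f : Fin (s + 1) → ℕ),
    (∀ i j : Fin (s + 1), i < j → f j < f i) → s < r → f 0 < m →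
    (∑ i : Fin (s + 1), Nat.choose (f i) (r - (i : ℕ))) ≤ Nat.choose m r := by
  intro s
  induction s with
  | zero =>
    intro r m f _ _ h0
    simpa using Nat.choose_le_choose r (Nat.le_of_lt_succ (Nat.lt_succ_of_lt h0))
  | succ s ih =>
    intro r m f hdec hsr h0
    obtain ⟨r, rfl⟩ : ∃ r', r = r' + 1 := ⟨r - 1, by omega⟩
    obtain ⟨m, rfl⟩ : ∃ m', m = m' + 1 := ⟨m - 1, by omega⟩
    rw [Fin.sum_univ_succ]
    have htail : (∑ i : Fin (s + 1), Nat.choose (f i.succ) (r + 1 - ((i.succ : Fin (s+2)) : ℕ)))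
        ≤ Nat.choose m r := by
      have := ih r m (fun i => f i.succ)
        (fun i j hij => hdec i.succ j.succ (by simpa using hij))
        (by omega)
        (by
          have h1 : f (Fin.succ 0) < f 0 := hdec 0 (Fin.succ 0) (by simp [Fin.lt_def])
          show f (Fin.succ 0) < m
          omega)
      calc (∑ i : Fin (s + 1), Nat.choose (f i.succ) (r + 1 - ((i.succ : Fin (s+2)) : ℕ)))
          = ∑ i : Fin (s + 1), Nat.choose (f i.succ) (r - (i : ℕ)) := by
            apply Finset.sum_congr rfl
            intro i _
            congr 1
            simp only [Fin.val_succ]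
            omega
        _ ≤ Nat.choose m r := this
    have hhead : Nat.choose (f 0) (r + 1 - ((0 : Fin (s+2)) : ℕ)) ≤ Nat.choose m (r + 1) := by
      simpa using Nat.choose_le_choose (r + 1) (by omega : f 0 ≤ m)
    calc Nat.choose (f 0) (r + 1 - ((0 : Fin (s+2)) : ℕ))
          + ∑ i : Fin (s + 1), Nat.choose (f i.succ) (r + 1 - ((i.succ : Fin (s+2)) : ℕ))
        ≤ Nat.choose m (r + 1) + Nat.choose m r := Nat.add_le_add hhead htail
      _ = Nat.choose (m + 1) (r + 1) := by rw [Nat.choose_succ_succ' m r, Nat.add_comm]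

/-- There exists a colex initial segment of `k`-subsets of `Fin n` of any size `m ≤ C(n,k)`. -/
lemma kk_exists_initSeg (n k : ℕ) : ∀ m, m ≤ Nat.choose n k →
    ∃ 𝒜 : Finset (Finset (Fin n)), IsInitSeg 𝒜 k ∧ 𝒜.card = m := by
  classical
  intro m
  induction m with
  | zero => exact fun _ => ⟨∅, isInitSeg_empty, rfl⟩
  | succ m ih =>
    intro hm
    obtain ⟨𝒜, h𝒜, hcard⟩ := ih (by omega)
    have hsub : 𝒜 ⊆ Finset.powersetCard k Finset.univ := by
      intro x hx
      rw [Finset.mem_powersetCard]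
      exact ⟨Finset.subset_univ _, h𝒜.1 hx⟩
    have hR : ((Finset.powersetCard k (Finset.univ : Finset (Fin n))) \ 𝒜).Nonempty := by
      rw [← Finset.card_pos, Finset.card_sdiff_of_subset hsub, Finset.card_powersetCard,
        Finset.card_univ, Fintype.card_fin]
      omega
    set R := (Finset.powersetCard k (Finset.univ : Finset (Fin n))) \ 𝒜 with hRdef
    have hRim : (R.image toColex).Nonempty := hR.image _
    obtain ⟨b, hbR, hbmin⟩ : ∃ b ∈ R, toColex b = (R.image toColex).min' hRim := by
      have := Finset.min'_mem (R.image toColex) hRim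
      rw [Finset.mem_image] at this
      obtain ⟨b, hb, hb'⟩ := this
      exact ⟨b, hb, hb'⟩
    have hbnot : b ∉ 𝒜 := (Finset.mem_sdiff.1 hbR).2
    have hbcard : b.card = k := (Finset.mem_powersetCard.1 (Finset.mem_sdiff.1 hbR).1).2
    refine ⟨insert b 𝒜, ⟨?_, ?_⟩, ?_⟩
    · intro x hx
      rw [Finset.mem_coe, Finset.mem_insert] at hx
      rcases hx with rfl | hx
      · exact hbcard
      · exact h𝒜.1 hx
    · intro x u hx hu
      rw [Finset.mem_insert] at hx ⊢
      rcases hx with rfl | hx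
      · by_cases hu𝒜 : u ∈ 𝒜
        · exact Or.inr hu𝒜
        · exfalso
          have huR : u ∈ R := by
            rw [hRdef, Finset.mem_sdiff, Finset.mem_powersetCard]
            exact ⟨⟨Finset.subset_univ _, hu.2⟩, hu𝒜⟩
          have := Finset.min'_le (R.image toColex) (toColex u)
            (Finset.mem_image_of_mem _ huR)
          rw [← hbmin] at this
          exact absurd hu.1 (not_lt.2 this)
      · exact Or.inr (h𝒜.2 hx hu)
    · rw [Finset.card_insert_of_notMem hbnot, hcard]

open scoped FinsetFamily

section D
variable {n k s : ℕ} {f : Fin (s + 1) → ℕ}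

/-- The compressed witness family with prescribed size and shadow bound. -/
lemma kk_witness (hdec : ∀ i j : Fin (s + 1), i < j → f j < f i) (hfn : ∀ i, f i < n)
    (hsk : s < k) :
    ∃ 𝒟 : Finset (Finset (Fin n)), (𝒟 : Set (Finset (Fin n))).Sized (k + 1) ∧
      𝒟.card = (∑ i : Fin (s + 1), Nat.choose (f i) (k - (i : ℕ) + 1)) ∧
      (∂ 𝒟).card ≤ ∑ i : Fin (s + 1), Nat.choose (f i) (k - (i : ℕ)) := by
  classical
  set g : Fin (s + 1) → Fin n := fun i => ⟨f i, hfn i⟩ with hg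
  have hginj : Function.Injective g := by
    intro i j hij
    by_contra hne
    rcases lt_or_gt_of_ne hne with h | h
    · exact absurd (congrArg Fin.val hij) (Nat.ne_of_gt (hdec i j h))
    · exact absurd (congrArg Fin.val hij) (Nat.ne_of_lt (hdec j i h))
  set lower : Fin (s + 1) → Finset (Fin n) :=
    fun i => (Finset.range (f i)).attachFin
      (fun m hm => lt_trans (Finset.mem_range.1 hm) (hfn i)) with hlow
  have mem_lower : ∀ (i) (x : Fin n), x ∈ lower i ↔ (x : ℕ) < f i := by
    intro i x; simp [hlow, Finset.mem_attachFin]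
  have card_lower : ∀ i, (lower i).card = f i := by
    intro i; simp [hlow, Finset.card_attachFin]
  set Fix : Fin (s + 1) → Finset (Fin n) := fun i => (Finset.Iio i).image g with hFix
  have mem_Fix : ∀ (i) (x : Fin n), x ∈ Fix i ↔ ∃ j, j < i ∧ g j = x := by
    intro i x; simp [hFix, Finset.mem_image]
  have card_Fix : ∀ i, (Fix i).card = (i : ℕ) := by
    intro i
    rw [hFix, Finset.card_image_of_injective _ hginj, Fin.card_Iio]
  have disj : ∀ (i) (T : Finset (Fin n)), T ⊆ lower i → Disjoint T (Fix i) := by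
    intro i T hT
    rw [Finset.disjoint_left]
    intro x hxT hxF
    obtain ⟨j, hj, rfl⟩ := (mem_Fix i x).1 hxF
    have h1 : (g j : ℕ) < f i := (mem_lower i _).1 (hT hxT)
    have h2 : f i < f j := hdec j i hj
    simp only [hg] at h1
    omega
  -- the two families
  set D : ℕ → Fin (s + 1) → Finset (Finset (Fin n)) :=
    fun r i => ((lower i).powersetCard (r - (i : ℕ))).image (fun T => T ∪ Fix i) with hD
  have mem_D : ∀ (r) (i) (S : Finset (Fin n)),
      S ∈ D r i ↔ ∃ T, T ⊆ lower i ∧ T.card = r - (i : ℕ) ∧ S = T ∪ Fix i := by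
    intro r i S
    simp only [hD, Finset.mem_image, Finset.mem_powersetCard]
    constructor
    · rintro ⟨T, ⟨hT1, hT2⟩, rfl⟩; exact ⟨T, hT1, hT2, rfl⟩
    · rintro ⟨T, hT1, hT2, rfl⟩; exact ⟨T, ⟨hT1, hT2⟩, rfl⟩
  have card_D_le : ∀ r i, (D r i).card ≤ Nat.choose (f i) (r - (i : ℕ)) := by
    intro r i
    calc (D r i).card ≤ ((lower i).powersetCard (r - (i : ℕ))).card := Finset.card_image_le
      _ = Nat.choose (f i) (r - (i : ℕ)) := by rw [Finset.card_powersetCard, card_lower]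
  have card_D : ∀ r i, (D r i).card = Nat.choose (f i) (r - (i : ℕ)) := by
    intro r i
    rw [hD]
    rw [Finset.card_image_of_injOn, Finset.card_powersetCard, card_lower]
    intro T hT T' hT' hTT
    rw [Finset.mem_coe, Finset.mem_powersetCard] at hT hT'
    have h1 : T = (T ∪ Fix i) \ Fix i := by
      rw [Finset.union_sdiff_right, Finset.sdiff_eq_self_of_disjoint (disj i T hT.1)]
    have h2 : T' = (T' ∪ Fix i) \ Fix i := by
      rw [Finset.union_sdiff_right, Finset.sdiff_eq_self_of_disjoint (disj i T' hT'.1)]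
    rw [h1, h2]
    exact congrArg (fun S => S \ Fix i) hTT
  -- cards of members
  have sized_D : ∀ (r : ℕ) (i : Fin (s + 1)) (S : Finset (Fin n)),
      (i : ℕ) ≤ r → S ∈ D r i → S.card = r := by
    intro r i S hir hS
    obtain ⟨T, hT1, hT2, rfl⟩ := (mem_D r i S).1 hS
    rw [Finset.card_union_of_disjoint (disj i T hT1), hT2, card_Fix]
    omega
  -- pairwise disjointness of the blocks
  have Dkey : ∀ (r : ℕ) (i j : Fin (s + 1)), i < j → ∀ S, S ∈ D r i → S ∈ D r j → False := by
    intro r i j h S hSi hSj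
    obtain ⟨T, hT1, _, rfl⟩ := (mem_D r i S).1 hSi
    obtain ⟨T', hT1', _, hST⟩ := (mem_D r j _).1 hSj
    have hgi : g i ∈ T' ∪ Fix j := by
      rw [Finset.mem_union]
      exact Or.inr ((mem_Fix j (g i)).2 ⟨i, h, rfl⟩)
    rw [← hST, Finset.mem_union] at hgi
    rcases hgi with hgi | hgi
    · have h1 := (mem_lower i (g i)).1 (hT1 hgi)
      simp only [hg] at h1
      omega
    · obtain ⟨j', hj', hj'eq⟩ := (mem_Fix i (g i)).1 hgi
      exact absurd (hginj hj'eq) (ne_of_lt hj')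
  have Ddisj : ∀ r, Set.PairwiseDisjoint (Finset.univ : Finset (Fin (s+1))) (D r) := by
    intro r i _ j _ hij
    rw [Function.onFun, Finset.disjoint_left]
    intro S hSi hSj
    rcases lt_or_gt_of_ne hij with h | h
    · exact Dkey r i j h S hSi hSj
    · exact Dkey r j i h S hSj hSi
  refine ⟨Finset.univ.biUnion (D (k + 1)), ?_, ?_, ?_⟩
  · intro S hS
    rw [Finset.mem_coe, Finset.mem_biUnion] at hS
    obtain ⟨i, _, hSi⟩ := hS
    exact sized_D (k + 1) i S (by omega) hSi
  · rw [Finset.card_biUnion (Ddisj (k + 1))]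
    refine Finset.sum_congr rfl fun i _ => ?_
    rw [card_D]
    congr 1
    omega
  · -- shadow bound
    have hsub : ∂ (Finset.univ.biUnion (D (k + 1))) ⊆ Finset.univ.biUnion (D k) := by
      intro u hu
      rw [Finset.mem_shadow_iff] at hu
      obtain ⟨S, hS, a, haS, rfl⟩ := hu
      rw [Finset.mem_biUnion] at hS
      obtain ⟨i, _, hSi⟩ := hS
      obtain ⟨T, hT1, hT2, rfl⟩ := (mem_D (k + 1) i S).1 hSi
      have hik : (i : ℕ) ≤ s := by omega
      rw [Finset.mem_union] at haS
      rw [Finset.mem_biUnion]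
      rcases haS with haT | haF
      · -- erase a non-fixed element
        refine ⟨i, Finset.mem_univ _, (mem_D k i _).2 ⟨T.erase a, ?_, ?_, ?_⟩⟩
        · exact (Finset.erase_subset _ _).trans hT1
        · rw [Finset.card_erase_of_mem haT, hT2]; omega
        · have hanF : a ∉ Fix i := Finset.disjoint_left.1 (disj i T hT1) haT
          rw [Finset.erase_union_distrib, Finset.erase_eq_of_notMem hanF]
      · -- erase a fixed element
        obtain ⟨j, hji, rfl⟩ := (mem_Fix i a).1 haF
        refine ⟨j, Finset.mem_univ _, (mem_D k j _).2
          ⟨T ∪ (Finset.Ioo j i).image g, ?_, ?_, ?_⟩⟩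
        · rw [Finset.union_subset_iff]
          constructor
          · intro x hx
            rw [mem_lower]
            have h1 := (mem_lower i x).1 (hT1 hx)
            have h2 := hdec j i hji
            omega
          · intro x hx
            rw [Finset.mem_image] at hx
            obtain ⟨j', hj', rfl⟩ := hx
            rw [Finset.mem_Ioo] at hj'
            rw [mem_lower]
            exact hdec j j' hj'.1
        · rw [Finset.card_union_of_disjoint, hT2,
            Finset.card_image_of_injective _ hginj, Fin.card_Ioo]
          · have := Fin.lt_def.1 hji
            omega
          · rw [Finset.disjoint_left]
            intro x hxT hxI
            rw [Finset.mem_image] at hxI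
            obtain ⟨j', hj', rfl⟩ := hxI
            rw [Finset.mem_Ioo] at hj'
            have h1 := (mem_lower i (g j')).1 (hT1 hxT)
            have h2 := hdec j' i hj'.2
            simp only [hg] at h1
            omega
        · -- the set equality
          ext x
          constructor
          · intro hx
            obtain ⟨hne, hmem⟩ := Finset.mem_erase.1 hx
            rcases Finset.mem_union.1 hmem with hx' | hx'
            · exact Finset.mem_union_left _ (Finset.mem_union_left _ hx')
            · obtain ⟨j', hj'i, rfl⟩ := (mem_Fix i x).1 hx'
              rcases lt_trichotomy j' j with h | h | h
              · exact Finset.mem_union_right _ ((mem_Fix j _).2 ⟨j', h, rfl⟩)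
              · exact absurd (congrArg g h) hne
              · exact Finset.mem_union_left _ (Finset.mem_union_right _
                  (Finset.mem_image_of_mem g (Finset.mem_Ioo.2 ⟨h, hj'i⟩)))
          · intro hx
            rw [Finset.mem_erase]
            rcases Finset.mem_union.1 hx with hx' | hx'
            · rcases Finset.mem_union.1 hx' with hx'' | hx''
              · refine ⟨?_, Finset.mem_union_left _ hx''⟩
                rintro rfl
                have h1 := (mem_lower i (g j)).1 (hT1 hx'')
                have h2 := hdec j i hji
                simp only [hg] at h1
                omega
              · obtain ⟨j', hj', rfl⟩ := Finset.mem_image.1 hx''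
                rw [Finset.mem_Ioo] at hj'
                exact ⟨fun hc => absurd (hginj hc) (ne_of_gt hj'.1),
                  Finset.mem_union_right _ ((mem_Fix i _).2 ⟨j', hj'.2, rfl⟩)⟩
            · obtain ⟨j', hj'j, rfl⟩ := (mem_Fix j _).1 hx'
              exact ⟨fun hc => absurd (hginj hc) (ne_of_lt hj'j),
                Finset.mem_union_right _ ((mem_Fix i _).2 ⟨j', lt_trans hj'j hji, rfl⟩)⟩
    calc (∂ (Finset.univ.biUnion (D (k + 1)))).card
        ≤ (Finset.univ.biUnion (D k)).card := Finset.card_le_card hsub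
      _ ≤ ∑ i : Fin (s + 1), (D k i).card := Finset.card_biUnion_le
      _ ≤ ∑ i : Fin (s + 1), Nat.choose (f i) (k - (i : ℕ)) :=
          Finset.sum_le_sum fun i _ => card_D_le k i

end D

set_option maxHeartbeats 2000000 in
/-- Kruskal–Katona, existence part: given a vector `(1, c_1, …, c_t)` of positive integers
such that for every `1 ≤ k < t`, writing `c_k` in its `k`-canonical representation
`c_k = C(n_k, k) + ⋯ + C(n_{k-s}, k-s)` (encoded by `f : Fin (s+1) → ℕ`, `f i = n_{k-i}`),
one has `c_{k+1} ≤ C(n_k, k+1) + ⋯ + C(n_{k-s}, k-s+1)`, there is a simplicial complex `C`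
with `c_i(C) = c_i` for all `0 ≤ i ≤ t`. -/
theorem kruskal_katona_existence (t : ℕ) (c : ℕ → ℕ)
    (hc0 : c 0 = 1) (hpos : ∀ i ≤ t, 0 < c i)
    (hbound : ∀ k, 1 ≤ k → k < t →
      ∃ (s : ℕ) (f : Fin (s + 1) → ℕ),
        s < k ∧
        (∀ i j : Fin (s + 1), i < j → f j < f i) ∧
        k - s ≤ f (Fin.last s) ∧
        c k = ∑ i : Fin (s + 1), Nat.choose (f i) (k - (i : ℕ)) ∧
        c (k + 1) ≤ ∑ i : Fin (s + 1), Nat.choose (f i) (k - (i : ℕ) + 1)) :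
    ∃ (n : ℕ) (C : Finset (Finset (Fin n))),
      IsSimplicialComplex C ∧ ∀ i ≤ t, faceCount C i = c i := by
  classical
  rcases Nat.eq_zero_or_pos t with rfl | ht
  · -- trivial case : only the empty face is required
    refine ⟨0, {∅}, ⟨Finset.mem_singleton_self _, fun v => v.elim0, ?_⟩, ?_⟩
    · intro s hs u hu
      rw [Finset.mem_singleton] at hs ⊢
      rw [hs] at hu
      exact Finset.subset_empty.1 hu
    · intro i hi
      interval_cases i
      rw [faceCount, hc0]
      rw [show ({∅} : Finset (Finset (Fin 0))).filter (fun s => s.card = 0) = {∅} by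
        ext s; simp [Finset.card_eq_zero]]
      rfl
  set n := c 1 with hn
  -- Step A : all face numbers fit among the subsets of `Fin n`
  have hA : ∀ k, k ≤ t → c k ≤ Nat.choose n k := by
    intro k
    induction k with
    | zero => intro _; simp [hc0]
    | succ k ih =>
      intro hk1
      rcases Nat.eq_zero_or_pos k with rfl | hkpos
      · simp [hn, Nat.choose_one_right]
      have hkt : k < t := by omega
      have hck := ih (by omega)
      obtain ⟨s, f, hsk, hdec, hlast, hrep, hub⟩ := hbound k hkpos hkt
      have hckpos : 0 < c k := hpos k (by omega)
      have hnk : k ≤ n := by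
        by_contra h
        rw [Nat.choose_eq_zero_of_lt (by omega)] at hck
        omega
      have hC0 : Nat.choose (f 0) k ≤ c k := by
        rw [hrep]
        have := Finset.single_le_sum
          (f := fun i : Fin (s + 1) => Nat.choose (f i) (k - (i : ℕ)))
          (fun i _ => Nat.zero_le _) (Finset.mem_univ 0)
        simpa using this
      have hf0n : f 0 ≤ n := by
        by_contra h
        have h1 : Nat.choose (n + 1) k ≤ Nat.choose (f 0) k :=
          Nat.choose_le_choose k (by omega)
        have h2 : Nat.choose (n + 1) k = Nat.choose n k + Nat.choose n (k - 1) := by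
          rcases k with _ | k'
          · omega
          · rw [Nat.choose_succ_succ' n k', Nat.add_sub_cancel, Nat.add_comm]
        have h3 : 0 < Nat.choose n (k - 1) := Nat.choose_pos (by omega)
        omega
      rcases eq_or_lt_of_le hf0n with hf0 | hf0
      · -- f 0 = n ; then s = 0 necessarily
        rcases Nat.eq_zero_or_pos s with rfl | hspos
        · have : c (k + 1) ≤ Nat.choose (f 0) (k + 1) := by
            rw [Fin.sum_univ_one] at hub
            simpa using hub
          rwa [hf0] at this
        · exfalso
          have h0last : (0 : Fin (s + 1)) ≠ Fin.last s := by
            simp [Fin.ext_iff]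
            omega
          have hpair : Nat.choose (f 0) k + Nat.choose (f (Fin.last s)) (k - s) ≤ c k := by
            rw [hrep]
            have := Finset.sum_le_sum_of_subset
              (s := ({0, Fin.last s} : Finset (Fin (s + 1))))
              (f := fun i : Fin (s + 1) => Nat.choose (f i) (k - (i : ℕ)))
              (Finset.subset_univ _)
            rw [Finset.sum_pair h0last] at this
            simpa using this
          have hlastpos : 0 < Nat.choose (f (Fin.last s)) (k - s) := Nat.choose_pos hlast
          rw [hf0] at hpair
          omega
      · -- f 0 < n
        have hsum := kk_sum_le s (k + 1) n f hdec (by omega) hf0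
        have heq : (∑ i : Fin (s + 1), Nat.choose (f i) (k - (i : ℕ) + 1))
            = ∑ i : Fin (s + 1), Nat.choose (f i) (k + 1 - (i : ℕ)) := by
          refine Finset.sum_congr rfl fun i _ => ?_
          congr 1
          omega
        rw [heq] at hub
        exact hub.trans hsum
  -- Step B : choose the initial-segment families
  have hAex : ∀ k : ℕ, ∃ 𝒜 : Finset (Finset (Fin n)), k ≤ t → IsInitSeg 𝒜 k ∧ 𝒜.card = c k := by
    intro k
    by_cases h : k ≤ t
    · obtain ⟨𝒜, h1, h2⟩ := kk_exists_initSeg n k (c k) (hA k h)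
      exact ⟨𝒜, fun _ => ⟨h1, h2⟩⟩
    · exact ⟨∅, fun h' => absurd h' h⟩
  choose A hAprop using hAex
  have hsized : ∀ k, k ≤ t → ((A k : Set (Finset (Fin n))).Sized k) :=
    fun k hk => (hAprop k hk).1.1
  have hcardA : ∀ k, k ≤ t → (A k).card = c k := fun k hk => (hAprop k hk).2
  -- A 0 = {∅}
  have hA0 : A 0 = {∅} := by
    have h1 : (A 0).card = 1 := by rw [hcardA 0 (Nat.zero_le t), hc0]
    obtain ⟨w, hw⟩ := Finset.card_eq_one.1 h1
    have hw0 : w = ∅ := Finset.card_eq_zero.1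
      (hsized 0 (Nat.zero_le t) (by rw [hw]; exact Finset.mem_singleton_self w))
    rw [hw, hw0]
  -- full levels
  have hfull : ∀ k, k ≤ t → c k = Nat.choose n k →
      A k = Finset.powersetCard k Finset.univ := by
    intro k hk hck
    have hsub : A k ⊆ Finset.powersetCard k Finset.univ := by
      intro x hx
      rw [Finset.mem_powersetCard]
      exact ⟨Finset.subset_univ _, hsized k hk hx⟩
    refine Finset.eq_of_subset_of_card_le hsub ?_
    rw [Finset.card_powersetCard, Finset.card_univ, Fintype.card_fin, hcardA k hk, hck]
  -- Step C : the shadow of each level is contained in the previous one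
  have hshadow : ∀ j, j + 1 ≤ t → ∂ (A (j + 1)) ⊆ A j := by
    intro j hjt u hu
    have husized : u.card = j := by
      have := Set.Sized.shadow (hsized (j + 1) hjt) (Finset.mem_coe.2 hu)
      simpa using this
    rcases Nat.eq_zero_or_pos j with rfl | hjpos
    · rw [hA0, Finset.mem_singleton]
      exact Finset.card_eq_zero.1 husized
    by_cases hcj : c j = Nat.choose n j
    · rw [hfull j (by omega) hcj, Finset.mem_powersetCard]
      exact ⟨Finset.subset_univ _, husized⟩
    obtain ⟨s, f, hsk, hdec, hlast, hrep, hub⟩ := hbound j hjpos (by omega)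
    have hcjlt : c j < Nat.choose n j := lt_of_le_of_ne (hA j (by omega)) hcj
    have hC0 : Nat.choose (f 0) j ≤ c j := by
      rw [hrep]
      have := Finset.single_le_sum
        (f := fun i : Fin (s + 1) => Nat.choose (f i) (j - (i : ℕ)))
        (fun i _ => Nat.zero_le _) (Finset.mem_univ 0)
      simpa using this
    have hf0 : f 0 < n := by
      by_contra h
      have := Nat.choose_le_choose j (not_lt.1 h)
      omega
    have hfn : ∀ i, f i < n := by
      intro i
      rcases eq_or_ne i 0 with rfl | hi
      · exact hf0
      · exact lt_trans (hdec 0 i (Fin.pos_of_ne_zero hi)) hf0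
    obtain ⟨𝒟, h𝒟sized, h𝒟card, h𝒟shadow⟩ := kk_witness hdec hfn hsk
    have hcount : (A (j + 1)).card ≤ 𝒟.card := by
      rw [hcardA (j + 1) hjt, h𝒟card]
      exact hub
    have hkk := Finset.kruskal_katona h𝒟sized hcount (hAprop (j + 1) hjt).1
    have h1 : (∂ (A (j + 1))).card ≤ (A j).card := by
      calc (∂ (A (j + 1))).card ≤ (∂ 𝒟).card := hkk
        _ ≤ ∑ i : Fin (s + 1), Nat.choose (f i) (j - (i : ℕ)) := h𝒟shadow
        _ = c j := hrep.symm
        _ = (A j).card := (hcardA j (by omega)).symm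
    have h2 : IsInitSeg (∂ (A (j + 1))) j := by
      have := ((hAprop (j + 1) hjt).1).shadow
      simpa using this
    rcases h2.total (hAprop j (by omega)).1 with hss | hss
    · exact hss hu
    · exact (Finset.eq_of_subset_of_card_le hss h1).symm ▸ hu
  -- Step D : downward closure
  have hdown : ∀ d k, k ≤ t → ∀ S ∈ A k, ∀ u ⊆ S, u.card + d = k → u ∈ A (k - d) := by
    intro d
    induction d with
    | zero =>
      intro k hk S hS u hu hcardu
      have hSk : S.card = k := hsized k hk hS
      have : u = S := Finset.eq_of_subset_of_card_le hu (by omega)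
      rw [this]
      simpa using hS
    | succ d ih =>
      intro k hk S hS u hu hcardu
      have hSk : S.card = k := hsized k hk hS
      obtain ⟨w, huw, hwS, hwcard⟩ := Finset.exists_subsuperset_card_eq hu
        (Nat.le_succ _) (by omega : u.card + 1 ≤ S.card)
      have hw : w ∈ A (k - d) := ih k hk S hS w hwS (by omega)
      have humem : u ∈ ∂ (A (k - d)) :=
        Finset.mem_shadow_iff_exists_mem_card_add_one.2 ⟨w, hw, huw, by omega⟩
      have hkd : k - d = (k - (d + 1)) + 1 := by omega
      rw [hkd] at humem
      exact hshadow (k - (d + 1)) (by omega) humem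
  -- assemble the complex
  refine ⟨n, (Finset.range (t + 1)).biUnion A, ⟨?_, ?_, ?_⟩, ?_⟩
  · exact Finset.mem_biUnion.2 ⟨0, Finset.mem_range.2 (by omega),
      by rw [hA0]; exact Finset.mem_singleton_self _⟩
  · intro v
    have hA1 : A 1 = Finset.powersetCard 1 Finset.univ :=
      hfull 1 ht (by rw [hn, Nat.choose_one_right])
    refine Finset.mem_biUnion.2 ⟨1, Finset.mem_range.2 (by omega), ?_⟩
    rw [hA1, Finset.mem_powersetCard]
    exact ⟨Finset.subset_univ _, Finset.card_singleton _⟩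
  · intro S hS u hu
    obtain ⟨k, hk, hSk⟩ := Finset.mem_biUnion.1 hS
    rw [Finset.mem_range] at hk
    have hkt : k ≤ t := by omega
    have hcardle : u.card ≤ k := by
      rw [← hsized k hkt hSk]
      exact Finset.card_le_card hu
    have := hdown (k - u.card) k hkt S hSk u hu (by omega)
    exact Finset.mem_biUnion.2 ⟨k - (k - u.card), Finset.mem_range.2 (by omega), this⟩
  · intro i hi
    have hfilter : ((Finset.range (t + 1)).biUnion A).filter (fun s => s.card = i) = A i := by
      ext S
      rw [Finset.mem_filter, Finset.mem_biUnion]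
      constructor
      · rintro ⟨⟨k, hk, hSk⟩, hScard⟩
        rw [Finset.mem_range] at hk
        have hki : k = i := by
          have := hsized k (by omega) hSk
          omega
        exact hki ▸ hSk
      · intro hS
        exact ⟨⟨i, Finset.mem_range.2 (by omega), hS⟩, hsized i hi hS⟩
    rw [faceCount, hfilter, hcardA i hi]
end

section
/- Given positive integers m, k, and r with r ≥ k, there exist unique s, n_k, n_{k-1}, ..., n_{k-s} such that m = T(n_k, k, r) + T(n_{k-1}, k-1, r-1) + ... + T(n_{k-s}, k-s, r-s), where n_{k-i} - floor(n_{k-i}/(r-i)) > n_{k-i-1} for all 0 ≤ i < s, and n_{k-s} ≥ k-s > 0. -/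
/-- `turanCount n k r` is the number of `k`-cliques of the Turán graph `T_{n,r}`. -/
def turanCount (n k r : ℕ) : ℕ :=
  ((SimpleGraph.turanGraph n r).cliqueFinset k).card

open Finset

/-- Inj-residue predicate -/
def IR (r : ℕ) (S : Finset ℕ) : Prop := ∀ x ∈ S, ∀ y ∈ S, x % r = y % r → x = y

instance (r : ℕ) : DecidablePred (IR r) := fun _ => by unfold IR; infer_instance

def N (n k r : ℕ) : ℕ := (((range n).powersetCard k).filter (IR r)).card

lemma turanCount_eq (n k r : ℕ) : turanCount n k r = N n k r := by
  classical
  unfold turanCount N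
  apply Finset.card_bij (fun S _ => S.map Fin.valEmbedding)
  · intro S hS
    rw [SimpleGraph.mem_cliqueFinset_iff, SimpleGraph.isNClique_iff] at hS
    simp only [mem_filter, mem_powersetCard]
    refine ⟨⟨?_, by simp [hS.2]⟩, ?_⟩
    · intro x hx
      simp only [mem_map, Fin.valEmbedding_apply] at hx
      obtain ⟨v, _, rfl⟩ := hx
      simpa using v.isLt
    · intro x hx y hy hxy
      simp only [mem_map, Fin.valEmbedding_apply] at hx hy
      obtain ⟨v, hv, rfl⟩ := hx
      obtain ⟨w, hw, rfl⟩ := hy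
      by_contra hne
      have : v ≠ w := fun h => hne (by rw [h])
      exact (hS.1 hv hw this) hxy
  · intro S hS T hT h
    exact Finset.map_injective _ h
  · intro T hT
    simp only [mem_filter, mem_powersetCard] at hT
    obtain ⟨⟨hsub, hcard⟩, hinj⟩ := hT
    refine ⟨T.attachFin (fun x hx => by simpa using hsub hx), ?_, ?_⟩
    · rw [SimpleGraph.mem_cliqueFinset_iff, SimpleGraph.isNClique_iff]
      constructor
      · intro v hv w hw hne
        rw [Finset.mem_coe, Finset.mem_attachFin] at hv hw
        show (v:ℕ) % r ≠ (w:ℕ) % r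
        intro h
        exact hne (Fin.ext (hinj _ hv _ hw h))
      · rw [Finset.card_attachFin, hcard]
    · ext x
      simp only [mem_map, Fin.valEmbedding_apply]
      constructor
      · rintro ⟨v, hv, rfl⟩
        simpa using hv
      · intro hx
        exact ⟨⟨x, by simpa using hsub hx⟩, by simpa using hx, rfl⟩

lemma N_mono {n n' : ℕ} (k r : ℕ) (h : n ≤ n') : N n k r ≤ N n' k r := by
  apply Finset.card_le_card
  intro S hS
  simp only [mem_filter, mem_powersetCard] at *
  exact ⟨⟨hS.1.1.trans (range_subset_range.2 h), hS.1.2⟩, hS.2⟩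

lemma N_zero_right (n r : ℕ) : N n 0 r = 1 := by
  unfold N
  rw [powersetCard_zero]
  rw [filter_singleton]
  simp [IR]

lemma N_eq_zero {n k r : ℕ} (h : n < k) : N n k r = 0 := by
  unfold N
  rw [Finset.card_eq_zero, filter_eq_empty_iff]
  intro S hS
  rw [mem_powersetCard] at hS
  exfalso
  have := Finset.card_le_card hS.1
  rw [card_range] at this
  omega

lemma N_pos {n k r : ℕ} (hkr : k ≤ r) (hkn : k ≤ n) : 0 < N n k r := by
  unfold N
  rw [Finset.card_pos]
  refine ⟨range k, ?_⟩
  simp only [mem_filter, mem_powersetCard, card_range]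
  refine ⟨⟨range_subset_range.2 hkn, trivial⟩, ?_⟩
  intro x hx y hy hxy
  rw [mem_range] at hx hy
  rwa [Nat.mod_eq_of_lt (lt_of_lt_of_le hx hkr), Nat.mod_eq_of_lt (lt_of_lt_of_le hy hkr)] at hxy

lemma N_self (k r : ℕ) (hkr : k ≤ r) : N k k r = 1 := by
  unfold N
  have hp := Finset.powersetCard_self (range k)
  rw [card_range] at hp
  rw [hp, filter_singleton, if_pos]
  · exact card_singleton _
  · intro x hx y hy hxy
    rw [mem_range] at hx hy
    rwa [Nat.mod_eq_of_lt (lt_of_lt_of_le hx hkr), Nat.mod_eq_of_lt (lt_of_lt_of_le hy hkr)] at hxy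

/-- forward map: delete residue class `c` mod `R+1`, renumber to mod `R` -/
def gm (R c x : ℕ) : ℕ := x/(R+1)*R + (if x%(R+1) < c then x%(R+1) else x%(R+1)-1)
/-- inverse map -/
def gmi (R c y : ℕ) : ℕ := y/R*(R+1) + (if y%R < c then y%R else y%R + 1)

section arith
variable {n R : ℕ}

lemma gm_lt (x : ℕ) (hx : x < n) (hc : x % (R+1) ≠ n % (R+1)) :
    gm R (n % (R+1)) x < n - n/(R+1) := by
  unfold gm
  set r := R + 1 with hr
  set c := n % r with hcdef
  set Q := n / r with hQ
  set q := x / r with hq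
  set s := x % r with hs
  have hn : r * Q + c = n := Nat.div_add_mod n r
  have hxe : r * q + s = x := Nat.div_add_mod x r
  have hcR : c < r := Nat.mod_lt _ (by omega)
  have hsR : s < r := Nat.mod_lt _ (by omega)
  have hm : n - Q = Q * R + c := by
    have : r * Q = Q * R + Q := by rw [hr]; ring
    omega
  rw [hm]
  by_cases hlt : s < c
  · rw [if_pos hlt]
    have hqQ : q ≤ Q := by
      by_contra hgt
      push_neg at hgt
      have : r * Q + r ≤ r * q := by
        have := Nat.mul_le_mul_left r hgt
        rw [Nat.mul_succ] at this; omega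
      omega
    have := Nat.mul_le_mul_right R hqQ
    omega
  · rw [if_neg hlt]
    push_neg at hlt
    have hsc : c < s := lt_of_le_of_ne hlt (fun h => hc (by rw [hcdef, hs] at *; omega))
    have hqQ : q < Q := by
      by_contra hge
      push_neg at hge
      have := Nat.mul_le_mul_left r hge
      omega
    have h2 : q * R + R ≤ Q * R := by
      have := Nat.mul_le_mul_right R hqQ
      rw [Nat.succ_mul] at this
      omega
    omega

lemma gm_mod (x : ℕ) (hc : x % (R+1) ≠ n % (R+1)) :
    gm R (n % (R+1)) x % R = (if x%(R+1) < n % (R+1) then x%(R+1) else x%(R+1)-1) ∧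
    gm R (n % (R+1)) x / R = x / (R+1) := by
  unfold gm
  set r := R + 1
  set c := n % r with hcdef
  set s := x % r with hs
  have hcR : c < r := Nat.mod_lt _ (by omega)
  have hsR : s < r := Nat.mod_lt _ (by omega)
  have hs' : (if s < c then s else s - 1) < R := by
    by_cases h : s < c
    · rw [if_pos h]; omega
    · rw [if_neg h]; push_neg at h; omega
  constructor
  · rw [Nat.mul_add_mod' (x/r) R _, Nat.mod_eq_of_lt hs']
  · rw [Nat.add_comm, Nat.add_mul_div_right _ _ (show 0 < R by omega), Nat.div_eq_of_lt hs']
    omega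
end arith

section arith2
variable {n R : ℕ}

lemma gm_resp (x y : ℕ) (hx : x % (R+1) ≠ n % (R+1)) (hy : y % (R+1) ≠ n % (R+1)) :
    x % (R+1) = y % (R+1) ↔ gm R (n % (R+1)) x % R = gm R (n % (R+1)) y % R := by
  rw [(gm_mod x hx).1, (gm_mod y hy).1]
  have hcR : n % (R+1) < R+1 := Nat.mod_lt _ (by omega)
  have hxR : x % (R+1) < R+1 := Nat.mod_lt _ (by omega)
  have hyR : y % (R+1) < R+1 := Nat.mod_lt _ (by omega)
  constructor
  · intro h; rw [h]
  · intro h; split_ifs at h <;> omega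

lemma gm_inj (x y : ℕ) (hx : x % (R+1) ≠ n % (R+1)) (hy : y % (R+1) ≠ n % (R+1))
    (h : gm R (n % (R+1)) x = gm R (n % (R+1)) y) : x = y := by
  have hmx := gm_mod (n := n) x hx
  have hmy := gm_mod (n := n) y hy
  have hdiv : x / (R+1) = y / (R+1) := by rw [← hmx.2, ← hmy.2, h]
  have hmod : x % (R+1) = y % (R+1) := by
    rw [gm_resp x y hx hy, h]
  have e1 := Nat.div_add_mod x (R+1)
  have e2 := Nat.div_add_mod y (R+1)
  rw [hdiv, hmod] at e1
  omega

lemma gmi_spec (y : ℕ) (hy : y < n - n/(R+1)) :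
    gmi R (n % (R+1)) y < n ∧ gmi R (n % (R+1)) y % (R+1) ≠ n % (R+1) ∧
    gm R (n % (R+1)) (gmi R (n % (R+1)) y) = y := by
  unfold gmi
  set r := R + 1 with hr
  set c := n % r with hcdef
  set Q := n / r with hQ
  set q := y / R with hq
  set s' := y % R with hs
  have hn : r * Q + c = n := Nat.div_add_mod n r
  have hcR : c < r := Nat.mod_lt _ (by omega)
  have hm : n - Q = Q * R + c := by
    have : r * Q = Q * R + Q := by rw [hr]; ring
    omega
  rw [hm] at hy
  have hR : 0 < R := by
    rcases Nat.eq_zero_or_pos R with h | h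
    · subst h; omega
    · exact h
  have hye : R * q + s' = y := Nat.div_add_mod y R
  have ecomm : R * q = q * R := Nat.mul_comm _ _
  have hs'R : s' < R := Nat.mod_lt _ hR
  set s := if s' < c then s' else s' + 1 with hsdef
  have hsr : s < r := by rw [hsdef]; split <;> omega
  have hsc : s ≠ c := by rw [hsdef]; split <;> omega
  have hqQ : q ≤ Q := by
    by_contra hgt
    push_neg at hgt
    have h6 := Nat.mul_le_mul_right R hgt
    rw [Nat.succ_mul] at h6
    omega
  have hx_mod : (q * r + s) % r = s := by
    rw [Nat.mul_add_mod' q r s] at *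
    exact Nat.mod_eq_of_lt hsr
  have hx_div : (q * r + s) / r = q := by
    rw [Nat.add_comm, Nat.add_mul_div_right _ _ (show 0 < r by omega), Nat.div_eq_of_lt hsr]
    omega
  have e4 : Q * r = r * Q := Nat.mul_comm _ _
  refine ⟨?_, ?_, ?_⟩
  · -- q * r + s < n
    rcases Nat.lt_or_ge q Q with hlt | hge
    · have e3 : (q+1) * r ≤ Q * r := Nat.mul_le_mul_right r hlt
      rw [Nat.succ_mul] at e3
      omega
    · have hqQ' : q = Q := le_antisymm hqQ hge
      have e5 : q * r = Q * r := by rw [hqQ']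
      have e6 : q * R = Q * R := by rw [hqQ']
      by_cases h1 : s' < c
      · have hss : s = s' := by rw [hsdef, if_pos h1]
        omega
      · exfalso
        push_neg at h1
        omega
  · rw [hx_mod]; exact hsc
  · unfold gm
    rw [hx_mod, hx_div]
    by_cases h1 : s' < c
    · have hss : s = s' := by rw [hsdef, if_pos h1]
      rw [hss, if_pos h1]
      omega
    · have hss : s = s' + 1 := by rw [hsdef, if_neg h1]
      push_neg at h1
      rw [hss, if_neg (by omega)]
      omega
end arith2

lemma N_rec (n k R : ℕ) :
    N (n+1) (k+1) (R+1) = N n (k+1) (R+1) + N (n - n/(R+1)) k R := by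
  classical
  unfold N
  rw [range_add_one, powersetCard_succ_insert notMem_range_self, filter_union,
    card_union_of_disjoint]
  swap
  · rw [disjoint_left]
    intro S hS hS'
    simp only [mem_filter, mem_powersetCard, mem_image] at hS hS'
    obtain ⟨⟨T, hT, rfl⟩, -⟩ := hS'
    exact (mem_range.1 (hS.1.1 (mem_insert_self n T))).false.elim
  congr 1
  -- bijection part
  set c := n % (R+1) with hc
  apply Finset.card_bij' (i := fun S _ => (S.erase n).image (gm R c))
    (j := fun T _ => insert n (T.image (gmi R c)))
  · -- left inverse
    intro S hS
    simp only [mem_filter, mem_image, mem_powersetCard] at hS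
    obtain ⟨⟨T, hT, rfl⟩, hIR⟩ := hS
    have hnT : n ∉ T := fun h => (mem_range.1 (hT.1 h)).false
    have hTprop : ∀ x ∈ T, x < n ∧ x % (R+1) ≠ c := by
      intro x hxT
      refine ⟨mem_range.1 (hT.1 hxT), fun hmod => ?_⟩
      have := hIR x (mem_insert_of_mem hxT) n (mem_insert_self n T) hmod
      exact hnT (this ▸ hxT)
    rw [erase_insert hnT, image_image]
    congr 1
    rw [← Finset.image_id (s := T)]
    rw [Finset.image_image]
    apply Finset.image_congr
    intro x hx
    simp only [Function.comp_apply, id_eq]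
    have h1 := hTprop x (by simpa using hx)
    have h2 := gmi_spec (n := n) (R := R) (gm R c x) (gm_lt x h1.1 h1.2)
    exact gm_inj _ _ h2.2.1 h1.2 h2.2.2
  · -- right inverse
    intro T hT
    simp only [mem_filter, mem_powersetCard] at hT
    obtain ⟨⟨hsub, hcard⟩, hIR⟩ := hT
    have hTprop : ∀ y ∈ T, gmi R c y < n ∧ gmi R c y % (R+1) ≠ c ∧ gm R c (gmi R c y) = y :=
      fun y hy => gmi_spec y (mem_range.1 (hsub hy))
    have hnmem : n ∉ T.image (gmi R c) := by
      simp only [mem_image]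
      rintro ⟨y, hy, hgy⟩
      exact absurd hgy (Nat.ne_of_lt (hTprop y hy).1)
    rw [erase_insert hnmem, image_image]
    rw [← Finset.image_id (s := T)]
    rw [Finset.image_image]
    apply Finset.image_congr
    intro y hy
    simp only [Function.comp_apply, id_eq]
    exact (hTprop y (by simpa using hy)).2.2

  · -- maps forward
    intro S hS
    simp only [mem_filter, mem_image, mem_powersetCard] at hS ⊢
    obtain ⟨⟨T, hT, rfl⟩, hIR⟩ := hS
    have hnT : n ∉ T := fun h => (mem_range.1 (hT.1 h)).false
    have hTprop : ∀ x ∈ T, x < n ∧ x % (R+1) ≠ c := by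
      intro x hxT
      refine ⟨mem_range.1 (hT.1 hxT), fun hmod => ?_⟩
      have := hIR x (mem_insert_of_mem hxT) n (mem_insert_self n T) hmod
      exact hnT (this ▸ hxT)
    rw [erase_insert hnT]
    refine ⟨⟨?_, ?_⟩, ?_⟩
    · intro y hy
      simp only [mem_image] at hy
      obtain ⟨x, hxT, rfl⟩ := hy
      exact mem_range.2 (gm_lt x (hTprop x hxT).1 (hTprop x hxT).2)
    · rw [card_image_of_injOn, hT.2]
      intro x hx y hy hxy
      exact gm_inj x y (hTprop x hx).2 (hTprop y hy).2 hxy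
    · intro a ha b hb hab
      simp only [mem_image] at ha hb
      obtain ⟨x, hx, rfl⟩ := ha
      obtain ⟨y, hy, rfl⟩ := hb
      have : x % (R+1) = y % (R+1) :=
        (gm_resp x y (hTprop x hx).2 (hTprop y hy).2).2 hab
      have h5 : x = y := by
        refine hIR x (mem_insert_of_mem hx) y (mem_insert_of_mem hy) this
      rw [h5]
  · -- maps backward
    intro T hT
    simp only [mem_filter, mem_powersetCard] at hT
    simp only [mem_filter, mem_image, mem_powersetCard]
    obtain ⟨⟨hsub, hcard⟩, hIR⟩ := hT
    have hTprop : ∀ y ∈ T, gmi R c y < n ∧ gmi R c y % (R+1) ≠ c ∧ gm R c (gmi R c y) = y :=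
      fun y hy => gmi_spec y (mem_range.1 (hsub hy))
    have hinj : Set.InjOn (gmi R c) T := by
      intro a ha b hb hab
      have e1 := (hTprop a ha).2.2
      have e2 := (hTprop b hb).2.2
      rw [← e1, ← e2, hab]
    have hnmem : n ∉ T.image (gmi R c) := by
      simp only [mem_image]
      rintro ⟨y, hy, hgy⟩
      exact absurd hgy (Nat.ne_of_lt (hTprop y hy).1)
    constructor
    · refine ⟨T.image (gmi R c), ⟨?_, ?_⟩, rfl⟩
      · intro x hx
        simp only [mem_image] at hx
        obtain ⟨y, hy, rfl⟩ := hx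
        exact mem_range.2 (hTprop y hy).1
      · rw [card_image_of_injOn hinj, hcard]
    · intro a ha b hb hab
      rcases mem_insert.1 ha with rfl | ha' <;> rcases mem_insert.1 hb with rfl | hb'
      · rfl
      · exfalso
        simp only [mem_image] at hb'
        obtain ⟨y, hy, rfl⟩ := hb'
        exact (hTprop y hy).2.1 hab.symm
      · exfalso
        simp only [mem_image] at ha'
        obtain ⟨y, hy, rfl⟩ := ha'
        exact (hTprop y hy).2.1 hab
      · simp only [mem_image] at ha' hb'
        obtain ⟨y, hy, rfl⟩ := ha'
        obtain ⟨z, hz, rfl⟩ := hb'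
        have hy' := hTprop y hy
        have hz' := hTprop z hz
        have : y % R = z % R := by
          have := (gm_resp (n := n) (gmi R c y) (gmi R c z) hy'.2.1 hz'.2.1).1 hab
          rwa [hy'.2.2, hz'.2.2] at this
        rw [hIR y hy z hz this]
lemma N_succ {k r : ℕ} (n : ℕ) (hk : 1 ≤ k) (hr : 1 ≤ r) :
    N (n+1) k r = N n k r + N (n - n/r) (k-1) (r-1) := by
  obtain ⟨k', rfl⟩ : ∃ k', k = k' + 1 := ⟨k - 1, by omega⟩
  obtain ⟨R, rfl⟩ : ∃ R, r = R + 1 := ⟨r - 1, by omega⟩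
  simpa using N_rec n k' R

lemma sub_div_ge {n k r : ℕ} (hk : 1 ≤ k) (hkr : k ≤ r) (hkn : k ≤ n) :
    k - 1 ≤ n - n / r := by
  have h3 : n / r ≤ n / k := Nat.div_le_div_left hkr (by omega)
  have hq1 : 1 ≤ n / k := (Nat.one_le_div_iff (by omega)).2 hkn
  have h5 : n / k * k ≤ n := Nat.div_mul_le_self n k
  obtain ⟨k', rfl⟩ : ∃ k', k = k' + 1 := ⟨k - 1, by omega⟩
  have h6 : n / (k'+1) * (k'+1) = n / (k'+1) * k' + n / (k'+1) := Nat.mul_succ _ _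
  have h7 : k' ≤ n / (k'+1) * k' := Nat.le_mul_of_pos_left _ hq1
  omega

lemma N_lt_succ {n k r : ℕ} (hk : 1 ≤ k) (hkr : k ≤ r) (hkn : k ≤ n) :
    N n k r < N (n+1) k r := by
  rw [N_succ n hk (by omega)]
  have := N_pos (n := n - n/r) (k := k-1) (r := r-1) (by omega) (sub_div_ge hk hkr hkn)
  omega

lemma N_lt_N {a b k r : ℕ} (hk : 1 ≤ k) (hkr : k ≤ r) (hka : k ≤ a) (hab : a < b) :
    N a k r < N b k r :=
  lt_of_lt_of_le (N_lt_succ hk hkr hka) (N_mono k r hab)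

lemma N_unbounded {k r : ℕ} (hk : 1 ≤ k) (hkr : k ≤ r) (d : ℕ) : d + 1 ≤ N (k + d) k r := by
  induction d with
  | zero => exact N_pos hkr le_rfl
  | succ d ih =>
    have := N_lt_succ (n := k + d) hk hkr (by omega)
    have h2 : k + (d+1) = (k + d) + 1 := by omega
    rw [h2]
    omega

lemma chain_ge {k r s : ℕ} {f : Fin (s+1) → ℕ} (hs : s < k)
    (hchain : ∀ i : Fin s, f i.succ < f i.castSucc - f i.castSucc / (r - (i:ℕ)))
    (hlast : k - s ≤ f (Fin.last s)) :
    ∀ i : Fin (s+1), k - (i:ℕ) ≤ f i := by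
  classical
  set g : ℕ → ℕ := fun t => if h : t < s + 1 then f ⟨t, h⟩ else 0 with hg
  have hgf : ∀ (t : ℕ) (h : t < s + 1), f ⟨t, h⟩ = g t := by
    intro t h
    show f ⟨t, h⟩ = dite (t < s + 1) (fun h => f ⟨t, h⟩) (fun _ => 0)
    rw [dif_pos h]
  have hgchain : ∀ t, t < s → g (t+1) < g t - g t / (r - t) := by
    intro t ht
    have hc := hchain ⟨t, ht⟩
    have e1 : f ((⟨t, ht⟩ : Fin s).succ) = g (t+1) := hgf (t+1) (by omega)
    have e2 : f ((⟨t, ht⟩ : Fin s).castSucc) = g t := hgf t (by omega)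
    rw [e1, e2] at hc
    exact hc
  have hglast : k - s ≤ g s := by
    have : f (Fin.last s) = g s := hgf s (by omega)
    rw [← this]
    exact hlast
  have key : ∀ j : ℕ, j ≤ s → k - (s - j) ≤ g (s - j) := by
    intro j
    induction j with
    | zero => intro _; simpa using hglast
    | succ j ih =>
      intro hj
      have hij := ih (by omega)
      have hc := hgchain (s - (j+1)) (by omega)
      have e3 : s - (j+1) + 1 = s - j := by omega
      rw [e3] at hc
      have := Nat.sub_le (g (s - (j+1))) (g (s - (j+1)) / (r - (s - (j+1))))
      omega
  intro i
  have h1 := key (s - (i:ℕ)) (by omega)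
  have h2 : s - (s - (i:ℕ)) = (i:ℕ) := by omega
  rw [h2] at h1
  have h4 : f i = g (i:ℕ) := by
    have := hgf (i:ℕ) i.isLt
    rw [← this]
  rw [h4]
  exact h1
  
lemma sum_lt : ∀ (s k r : ℕ) (f : Fin (s+1) → ℕ), s < k → k ≤ r →
    (∀ i : Fin s, f i.succ < f i.castSucc - f i.castSucc / (r - (i:ℕ))) →
    k - s ≤ f (Fin.last s) →
    (∑ i : Fin (s+1), N (f i) (k - (i:ℕ)) (r - (i:ℕ))) < N (f 0 + 1) k r := by
  intro s
  induction s with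
  | zero =>
    intro k r f hs hkr _ hlast
    rw [Fin.sum_univ_one]
    simp only [Fin.val_zero, Nat.sub_zero]
    exact N_lt_N (by omega) hkr (by simpa [Fin.last] using hlast) (by omega)
  | succ s ih =>
    intro k r f hs hkr hchain hlast
    set f' : Fin (s+1) → ℕ := fun i => f i.succ with hf'
    have hchain' : ∀ i : Fin s, f' i.succ < f' i.castSucc - f' i.castSucc / ((r-1) - (i:ℕ)) := by
      intro i
      have hc := hchain i.succ
      rw [← Fin.succ_castSucc] at hc
      have : r - ((i.succ : Fin (s+1)):ℕ) = (r-1) - (i:ℕ) := by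
        rw [Fin.val_succ]; omega
      rw [this] at hc
      exact hc
    have hlast' : (k-1) - s ≤ f' (Fin.last s) := by
      have : f' (Fin.last s) = f (Fin.last (s+1)) := by
        show f (Fin.last s).succ = f (Fin.last (s+1))
        rw [Fin.succ_last]
      rw [this]
      have : (k-1) - s = k - (s+1) := by omega
      rw [this]
      exact hlast
    have htail := ih (k-1) (r-1) f' (by omega) (by omega) hchain' hlast'
    have hsum : ∑ i : Fin (s+1+1), N (f i) (k - (i:ℕ)) (r - (i:ℕ)) =
        N (f 0) k r + ∑ i : Fin (s+1), N (f' i) ((k-1) - (i:ℕ)) ((r-1) - (i:ℕ)) := by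
      rw [Fin.sum_univ_succ]
      simp only [Fin.val_zero, Nat.sub_zero]
      congr 1
      apply Finset.sum_congr rfl
      intro i _
      rw [show ((i.succ : Fin (s+1+1)):ℕ) = (i:ℕ) + 1 from Fin.val_succ i,
        show k - ((i:ℕ)+1) = (k-1) - (i:ℕ) from by omega,
        show r - ((i:ℕ)+1) = (r-1) - (i:ℕ) from by omega]
    have hc0 := hchain 0
    have h01 : f' 0 = f (Fin.succ 0) := rfl
    have hNmono : N (f' 0 + 1) (k-1) (r-1) ≤ N (f 0 - f 0 / r) (k-1) (r-1) := by
      apply N_mono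
      have : f (Fin.succ 0) < f (Fin.castSucc 0) - f (Fin.castSucc 0) / (r - ((0 : Fin (s+1)):ℕ)) := hc0
      simp only [Fin.castSucc_zero, Fin.val_zero, Nat.sub_zero] at this
      rw [h01]
      omega
    have hrec : N (f 0 + 1) k r = N (f 0) k r + N (f 0 - f 0 / r) (k-1) (r-1) :=
      N_succ (f 0) (by omega) (by omega)
    omega

def Cond (m k r : ℕ) (sf : Σ s : ℕ, Fin (s + 1) → ℕ) : Prop :=
  sf.1 < k ∧
  (∀ i : Fin sf.1, sf.2 i.succ < sf.2 i.castSucc - sf.2 i.castSucc / (r - (i : ℕ))) ∧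
  k - sf.1 ≤ sf.2 (Fin.last sf.1) ∧
  m = ∑ i : Fin (sf.1 + 1), N (sf.2 i) (k - (i : ℕ)) (r - (i : ℕ))

lemma exists_rep : ∀ k m r, 0 < m → 0 < k → k ≤ r →
    ∃ sf : Σ s : ℕ, Fin (s + 1) → ℕ, Cond m k r sf := by
  intro k
  induction k with
  | zero => intro m r _ h; omega
  | succ k ih =>
    intro m r hm _ hkr
    obtain ⟨n, hn1, hnk, hup⟩ : ∃ n, N n (k+1) r ≤ m ∧ k+1 ≤ n ∧ m < N (n+1) (k+1) r := by
      have hwit : N (k+1) (k+1) r ≤ m := by rw [N_self _ _ hkr]; omega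
      refine ⟨Nat.findGreatest (fun t => N t (k+1) r ≤ m) ((k+1) + m), ?_, ?_, ?_⟩
      · exact Nat.findGreatest_spec (P := fun t => N t (k+1) r ≤ m) (by omega) hwit
      · exact Nat.le_findGreatest (by omega) hwit
      · set n := Nat.findGreatest (fun t => N t (k+1) r ≤ m) ((k+1) + m) with hn
        have hn1 : N n (k+1) r ≤ m := Nat.findGreatest_spec (P := fun t => N t (k+1) r ≤ m)
          (by omega) hwit
        have hnk : k+1 ≤ n := Nat.le_findGreatest (by omega) hwit
        have hnb : n ≤ (k+1) + m := Nat.findGreatest_le _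
        have hnlt : n < (k+1) + m := by
          rcases Nat.lt_or_ge n ((k+1)+m) with h | h
          · exact h
          · exfalso
            have heq : n = (k+1) + m := by omega
            have := N_unbounded (k := k+1) (r := r) (by omega) hkr m
            rw [← heq] at this
            omega
        by_contra h
        push_neg at h
        exact Nat.findGreatest_is_greatest (lt_add_one n) (by omega) h
    have hrec : N (n+1) (k+1) r = N n (k+1) r + N (n - n/r) k (r-1) := by
      have := N_succ n (k := k+1) (r := r) (by omega) (by omega)
      simpa using this
    by_cases hm' : m - N n (k+1) r = 0
    · refine ⟨⟨0, fun _ => n⟩, ?_, ?_, ?_, ?_⟩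
      · show 0 < k + 1
        omega
      · intro i
        exact i.elim0
      · show k + 1 - 0 ≤ n
        omega
      · show m = ∑ i : Fin (0 + 1), N n ((k+1) - (i:ℕ)) (r - (i:ℕ))
        rw [Fin.sum_univ_one]
        simp only [Fin.val_zero, Nat.sub_zero]
        omega
    · have hk1 : 1 ≤ k := by
        by_contra h
        push_neg at h
        interval_cases k
        rw [N_zero_right] at hrec
        omega
      obtain ⟨⟨s', f'⟩, hc1, hc2, hc3, hc4⟩ := ih (m - N n (k+1) r) (r-1)
        (by omega) (by omega) (by omega)
      dsimp only at hc1 hc2 hc3 hc4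
      have hterm0 : N (f' 0) k (r-1) ≤ m - N n (k+1) r := by
        calc N (f' 0) k (r-1)
            = N (f' 0) (k - ((0 : Fin (s'+1)):ℕ)) ((r-1) - ((0 : Fin (s'+1)):ℕ)) := by simp
          _ ≤ _ := hc4 ▸ Finset.single_le_sum (f := fun i : Fin (s'+1) =>
              N (f' i) (k - (i:ℕ)) ((r-1) - (i:ℕ))) (fun _ _ => Nat.zero_le _) (mem_univ 0)
      have hf'0 : f' 0 < n - n / r := by
        by_contra h
        push_neg at h
        have h2 : N (n - n/r) k (r-1) ≤ m - N n (k+1) r :=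
          le_trans (N_mono (n := n - n/r) (n' := f' 0) k (r-1) h) hterm0
        omega
      refine ⟨⟨s' + 1, Fin.cons n f'⟩, ?_, ?_, ?_, ?_⟩
      · show s' + 1 < k + 1
        omega
      · intro i
        dsimp only
        induction i using Fin.cases with
        | zero =>
          rw [Fin.cons_succ, Fin.castSucc_zero, Fin.cons_zero]
          simpa using hf'0
        | succ j =>
          rw [Fin.cons_succ, ← Fin.succ_castSucc, Fin.cons_succ]
          have e3 : r - ((j.succ : Fin (s'+1)):ℕ) = (r-1) - (j:ℕ) := by
            rw [Fin.val_succ]; omega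
          rw [e3]
          exact hc2 j
      · dsimp only
        have e1 : Fin.last (s'+1) = (Fin.last s').succ := (Fin.succ_last s').symm
        rw [e1, Fin.cons_succ]
        omega
      · dsimp only
        rw [Fin.sum_univ_succ]
        rw [Fin.cons_zero]
        simp only [Fin.val_zero, Nat.sub_zero]
        have e2 : ∀ j : Fin (s'+1),
            N ((Fin.cons n f' : Fin (s'+2) → ℕ) j.succ) ((k+1) - ((j.succ : Fin (s'+2)):ℕ))
              (r - ((j.succ : Fin (s'+2)):ℕ)) = N (f' j) (k - (j:ℕ)) ((r-1) - (j:ℕ)) := by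
          intro j
          rw [Fin.cons_succ]
          rw [show ((j.succ : Fin (s'+2)):ℕ) = (j:ℕ)+1 from Fin.val_succ j,
            show (k+1) - ((j:ℕ)+1) = k - (j:ℕ) from by omega,
            show r - ((j:ℕ)+1) = (r-1) - (j:ℕ) from by omega]
        rw [Finset.sum_congr rfl (fun j _ => e2 j)]
        omega

lemma cond_tail {m k r t : ℕ} {f : Fin (t+2) → ℕ} (h : Cond m (k+1) r ⟨t+1, f⟩) :
    Cond (m - N (f 0) (k+1) r) k (r-1) ⟨t, fun j => f j.succ⟩ := by
  obtain ⟨h1, h2, h3, h4⟩ := h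
  dsimp only at h1 h2 h3 h4 ⊢
  have hsum : m = N (f 0) (k+1) r +
      ∑ j : Fin (t+1), N (f j.succ) (k - (j:ℕ)) ((r-1) - (j:ℕ)) := by
    rw [Fin.sum_univ_succ] at h4
    simp only [Fin.val_zero, Nat.sub_zero] at h4
    have e2 : ∀ j : Fin (t+1), N (f j.succ) ((k+1) - ((j.succ : Fin (t+2)):ℕ))
        (r - ((j.succ : Fin (t+2)):ℕ)) = N (f j.succ) (k - (j:ℕ)) ((r-1) - (j:ℕ)) := by
      intro j
      rw [show ((j.succ : Fin (t+2)):ℕ) = (j:ℕ)+1 from Fin.val_succ j,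
        show (k+1) - ((j:ℕ)+1) = k - (j:ℕ) from by omega,
        show r - ((j:ℕ)+1) = (r-1) - (j:ℕ) from by omega]
    rw [Finset.sum_congr rfl (fun j _ => e2 j)] at h4
    exact h4
  refine ⟨show t < k from by omega, ?_, ?_,
    show m - N (f 0) (k+1) r =
      ∑ j : Fin (t+1), N (f j.succ) (k - (j:ℕ)) ((r-1) - (j:ℕ)) from by omega⟩
  · intro j
    have hc := h2 j.succ
    rw [← Fin.succ_castSucc] at hc
    rw [show r - ((j.succ : Fin (t+1)):ℕ) = (r-1) - (j:ℕ) from by rw [Fin.val_succ]; omega] at hc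
    exact hc
  · show k - t ≤ f (Fin.last t).succ
    rw [Fin.succ_last]
    rw [show k - t = (k+1) - (t+1) from by omega]
    exact h3

lemma cond_term0_le {m k r : ℕ} {sf : Σ s : ℕ, Fin (s+1) → ℕ} (h : Cond m k r sf) :
    N (sf.2 0) k r ≤ m := by
  obtain ⟨h1, h2, h3, h4⟩ := h
  calc N (sf.2 0) k r
      = N (sf.2 0) (k - ((0 : Fin (sf.1+1)):ℕ)) (r - ((0 : Fin (sf.1+1)):ℕ)) := by simp
    _ ≤ _ := h4 ▸ Finset.single_le_sum (f := fun i : Fin (sf.1+1) =>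
        N (sf.2 i) (k - (i:ℕ)) (r - (i:ℕ))) (fun _ _ => Nat.zero_le _) (mem_univ 0)

lemma cond_lt {m k r : ℕ} {sf : Σ s : ℕ, Fin (s+1) → ℕ} (hkr : k ≤ r) (h : Cond m k r sf) :
    m < N (sf.2 0 + 1) k r := by
  obtain ⟨h1, h2, h3, h4⟩ := h
  exact h4 ▸ sum_lt sf.1 k r sf.2 h1 hkr h2 h3

lemma uniq : ∀ k m r, k ≤ r → ∀ a b : (Σ s : ℕ, Fin (s+1) → ℕ),
    Cond m k r a → Cond m k r b → a = b := by
  intro k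
  induction k with
  | zero => intro m r _ a b ha _; exact absurd ha.1 (by omega)
  | succ k ih =>
    intro m r hkr a b ha hb
    have hma := cond_term0_le ha
    have hmb := cond_term0_le hb
    have hua := cond_lt hkr ha
    have hub := cond_lt hkr hb
    have hhead : a.2 0 = b.2 0 := by
      rcases lt_trichotomy (a.2 0) (b.2 0) with h | h | h
      · exfalso
        have := N_mono (n := a.2 0 + 1) (n' := b.2 0) (k+1) r (by omega)
        omega
      · exact h
      · exfalso
        have := N_mono (n := b.2 0 + 1) (n' := a.2 0) (k+1) r (by omega)
        omega
    obtain ⟨sa, fa⟩ := a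
    obtain ⟨sb, fb⟩ := b
    dsimp only at hhead hma hmb hua hub
    have tail_pos : ∀ (t : ℕ) (f : Fin (t+2) → ℕ), Cond m (k+1) r ⟨t+1, f⟩ →
        N (f 0) (k+1) r < m := by
      intro t f hc
      have h0 := cond_tail hc
      have hge := chain_ge hc.1 hc.2.1 hc.2.2.1 ((0 : Fin (t+1)).succ)
      dsimp only at hge
      rw [show (((0 : Fin (t+1)).succ : Fin (t+2)):ℕ) = 1 from rfl] at hge
      have hterm : N (f (0 : Fin (t+1)).succ) k (r-1) ≤ m - N (f 0) (k+1) r := by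
        calc N (f (0 : Fin (t+1)).succ) k (r-1)
            = N ((fun j => f j.succ) (0 : Fin (t+1)))
              (k - ((0 : Fin (t+1)):ℕ)) ((r-1) - ((0 : Fin (t+1)):ℕ)) := by simp
          _ ≤ _ := h0.2.2.2 ▸ Finset.single_le_sum (f := fun i : Fin (t+1) =>
              N ((fun j => f j.succ) i) (k - (i:ℕ)) ((r-1) - (i:ℕ)))
              (fun _ _ => Nat.zero_le _) (mem_univ 0)
      have hpos : 0 < N (f (0 : Fin (t+1)).succ) k (r-1) := N_pos (by omega) (by omega)
      have hle : N (f 0) (k+1) r ≤ m := by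
        have := cond_term0_le hc
        exact this
      omega
    cases sa with
    | zero =>
      cases sb with
      | zero =>
        have hf : fa = fb := by
          funext i
          have hi : i = 0 := Subsingleton.elim (α := Fin 1) i 0
          rw [hi]
          exact hhead
        rw [hf]
      | succ tb =>
        exfalso
        have hb' : N (fb 0) (k+1) r < m := tail_pos tb fb hb
        have ha4 := ha.2.2.2
        dsimp only at ha4
        rw [Fin.sum_univ_one] at ha4
        simp only [Fin.val_zero, Nat.sub_zero] at ha4
        rw [hhead] at ha4
        omega
    | succ ta =>
      cases sb with
      | zero =>
        exfalso
        have ha' : N (fa 0) (k+1) r < m := tail_pos ta fa ha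
        have hb4 := hb.2.2.2
        dsimp only at hb4
        rw [Fin.sum_univ_one] at hb4
        simp only [Fin.val_zero, Nat.sub_zero] at hb4
        rw [hhead] at ha'
        omega
      | succ tb =>
        have hta := cond_tail ha
        have htb := cond_tail hb
        rw [hhead] at hta
        have heq := ih (m - N (fb 0) (k+1) r) (r-1) (by omega) _ _ hta htb
        rw [Sigma.ext_iff] at heq
        obtain ⟨h1, h2⟩ := heq
        have h1' : ta = tb := h1
        subst h1'
        have h2' : (fun j : Fin (ta+1) => fa j.succ) = (fun j : Fin (ta+1) => fb j.succ) :=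
          eq_of_heq h2
        have hf : fa = fb := by
          funext i
          induction i using Fin.cases with
          | zero => exact hhead
          | succ j => exact congrFun h2' j
        rw [hf]

/-- Given positive integers `m`, `k`, `r` with `r ≥ k`, there are unique `s` and
`n_k, n_{k-1}, …, n_{k-s}` (encoded as `f : Fin (s+1) → ℕ` with `f i = n_{k-i}`) such that
`m = T(n_k, k, r) + T(n_{k-1}, k-1, r-1) + ⋯ + T(n_{k-s}, k-s, r-s)`, where
`n_{k-i} - ⌊n_{k-i}/(r-i)⌋ > n_{k-i-1}` for all `0 ≤ i < s` and `n_{k-s} ≥ k - s > 0`. -/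
theorem krCanonical_exists_unique (m k r : ℕ) (hm : 0 < m) (hk : 0 < k) (hkr : k ≤ r) :
    ∃! sf : Σ s : ℕ, Fin (s + 1) → ℕ,
      sf.1 < k ∧
      (∀ i : Fin sf.1, sf.2 i.succ < sf.2 i.castSucc - sf.2 i.castSucc / (r - (i : ℕ))) ∧
      k - sf.1 ≤ sf.2 (Fin.last sf.1) ∧
      m = ∑ i : Fin (sf.1 + 1), turanCount (sf.2 i) (k - (i : ℕ)) (r - (i : ℕ)) := by
  have hiff : ∀ sf : Σ s : ℕ, Fin (s + 1) → ℕ,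
      (sf.1 < k ∧
      (∀ i : Fin sf.1, sf.2 i.succ < sf.2 i.castSucc - sf.2 i.castSucc / (r - (i : ℕ))) ∧
      k - sf.1 ≤ sf.2 (Fin.last sf.1) ∧
      m = ∑ i : Fin (sf.1 + 1), turanCount (sf.2 i) (k - (i : ℕ)) (r - (i : ℕ))) ↔
      Cond m k r sf := by
    intro sf
    unfold Cond
    simp only [turanCount_eq]
  obtain ⟨a, ha⟩ := exists_rep k m r hm hk hkr
  exact ⟨a, (hiff a).2 ha, fun y hy => uniq k m r hkr y a ((hiff y).1 hy) ha⟩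
end

section
/- If G is a finite simple graph on n vertices with no clique on r+1 vertices, then for every i the number of i-vertex cliques of G is at most the number of i-vertex cliques of the Turán graph T_{n,r}. -/
open Finset Multiset

set_option linter.unusedSectionVars false

namespace ZykovAux



def eM (i : ℕ) (s : Multiset ℕ) : ℕ := ((s.powersetCard i).map Multiset.prod).sum

@[simp] lemma eM_zero (s : Multiset ℕ) : eM 0 s = 1 := by simp [eM]

@[simp] lemma eM_nil (i : ℕ) : eM (i+1) 0 = 0 := by simp [eM, Multiset.powersetCard_zero_right]

lemma eM_cons (i a : ℕ) (s : Multiset ℕ) :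
    eM (i+1) (a ::ₘ s) = eM (i+1) s + a * eM i s := by
  simp [eM, Multiset.powersetCard_cons, Multiset.map_map, Function.comp,
    Multiset.sum_map_mul_left]

/-- the balanced multiset of `s` parts summing to `m` -/
def bal (m s : ℕ) : Multiset ℕ :=
  Multiset.replicate (m % s) (m / s + 1) + Multiset.replicate (s - m % s) (m / s)

lemma bal_card (m s : ℕ) (hs : s ≠ 0) : Multiset.card (bal m s) = s := by
  have : m % s < s := Nat.mod_lt _ (Nat.pos_of_ne_zero hs)
  simp [bal]; omega

lemma bal_sum (m s : ℕ) (hs : s ≠ 0) : (bal m s).sum = m := by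
  have h1 : m % s < s := Nat.mod_lt _ (Nat.pos_of_ne_zero hs)
  have h2 := Nat.div_add_mod m s
  obtain ⟨t, ht⟩ : ∃ t, s = m % s + t := ⟨s - m % s, by omega⟩
  simp only [bal, Multiset.sum_add, Multiset.sum_replicate, smul_eq_mul]
  have h3 : s - m % s = t := by omega
  rw [h3]
  have h4 : m % s * (m / s + 1) + t * (m / s) = (m % s + t) * (m / s) + m % s := by ring
  rw [h4, ← ht, h2]

lemma eM_swap (i a b : ℕ) (t : Multiset ℕ) (h : b + 2 ≤ a) :
    eM i (a ::ₘ b ::ₘ t) ≤ eM i ((a-1) ::ₘ (b+1) ::ₘ t) := by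
  match i with
  | 0 => simp
  | 1 =>
    rw [eM_cons, eM_cons, eM_cons, eM_cons]
    simp only [eM_zero]
    omega
  | (i+2) =>
    rw [eM_cons, eM_cons, eM_cons, eM_cons, eM_cons, eM_cons]
    have hab : a * b ≤ (a-1) * (b+1) := by
      obtain ⟨c, rfl⟩ : ∃ c, a = b + 2 + c := ⟨a - (b+2), by omega⟩
      have : b + 2 + c - 1 = b + 1 + c := by omega
      rw [this]; nlinarith
    have ha : a - 1 + (b+1) = a + b := by omega
    nlinarith [eM (i+1) t, eM i t]

lemma exists_min (s : Multiset ℕ) (hs : s ≠ 0) : ∃ mn ∈ s, ∀ y ∈ s, mn ≤ y := by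
  induction s using Multiset.induction_on with
  | empty => simp at hs
  | cons a s ih =>
    rcases eq_or_ne s 0 with rfl | hs0
    · exact ⟨a, by simp, by simp⟩
    · obtain ⟨mn, hmn, hmin⟩ := ih hs0
      refine ⟨min a mn, ?_, ?_⟩
      · rcases le_total a mn with h | h
        · simp [min_eq_left h]
        · simp [min_eq_right h, Multiset.mem_cons_of_mem hmn]
      · intro y hy
        rcases Multiset.mem_cons.1 hy with rfl | hy
        · exact min_le_left _ _
        · exact le_trans (min_le_right _ _) (hmin y hy)

lemma count_two (a b : ℕ) (s : Multiset ℕ) (hmem : ∀ x ∈ s, x = a ∨ x = b) (hab : a ≠ b) :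
    Multiset.card s = s.count a + s.count b ∧ s.sum = a * s.count a + b * s.count b := by
  induction s using Multiset.induction_on with
  | empty => simp
  | cons x s ih =>
    have hx := hmem x (Multiset.mem_cons_self x s)
    obtain ⟨h1, h2⟩ := ih (fun y hy => hmem y (Multiset.mem_cons_of_mem hy))
    rcases hx with rfl | rfl
    · rw [Multiset.card_cons, Multiset.sum_cons, Multiset.count_cons_self,
        Multiset.count_cons_of_ne (Ne.symm hab), h1, h2]
      exact ⟨by omega, by ring⟩
    · rw [Multiset.card_cons, Multiset.sum_cons, Multiset.count_cons_self,
        Multiset.count_cons_of_ne hab, h1, h2]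
      exact ⟨by omega, by ring⟩

lemma balanced_eq (s : Multiset ℕ) (h : ∀ x ∈ s, ∀ y ∈ s, x ≤ y + 1) :
    s = bal s.sum (Multiset.card s) := by
  rcases eq_or_ne s 0 with rfl | hs
  · simp [bal]
  · obtain ⟨mn, hmn, hmin⟩ := exists_min s hs
    have hmem : ∀ x ∈ s, x = mn ∨ x = mn + 1 := fun x hx => by
      have h1 := hmin x hx; have h2 := h x hx mn hmn; omega
    obtain ⟨hcard, hsum⟩ := count_two mn (mn+1) s hmem (by omega)
    set c1 := s.count mn with hc1
    set c2 := s.count (mn+1) with hc2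
    have hc1pos : 0 < c1 := Multiset.count_pos.2 hmn
    have hrep : s = Multiset.replicate c2 (mn+1) + Multiset.replicate c1 mn := by
      ext a
      rcases eq_or_ne a mn with rfl | h1
      · simp [Multiset.count_replicate, hc1]
      · rcases eq_or_ne a (mn+1) with rfl | h2
        · simp [Multiset.count_replicate, hc2, Ne.symm h1]
        · have : a ∉ s := fun ha => by rcases hmem a ha with rfl | rfl <;> simp_all
          simp [Multiset.count_replicate, Ne.symm h1, Ne.symm h2, Multiset.count_eq_zero.2 this]
    have hmod : s.sum % Multiset.card s = c2 := by
      rw [hsum, hcard]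
      have : mn * c1 + (mn+1) * c2 = c2 + (c1 + c2) * mn := by ring
      rw [this, Nat.add_mul_mod_self_left, Nat.mod_eq_of_lt (by omega)]
    have hdiv : s.sum / Multiset.card s = mn := by
      rw [hsum, hcard]
      have : mn * c1 + (mn+1) * c2 = c2 + (c1 + c2) * mn := by ring
      rw [this, Nat.add_mul_div_left _ _ (by omega), Nat.div_eq_of_lt (by omega)]
      omega
    rw [bal, hmod, hdiv, hcard]
    have : c1 + c2 - c2 = c1 := by omega
    rw [this, hrep]

lemma eM_le_bal_aux : ∀ (P i : ℕ) (s : Multiset ℕ), (s.map (fun x => x*x)).sum ≤ P →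
    eM i s ≤ eM i (bal s.sum (Multiset.card s)) := by
  intro P
  induction P with
  | zero =>
    intro i s hP
    have : ∀ x ∈ s, ∀ y ∈ s, x ≤ y + 1 := by
      intro x hx y hy
      have hmem' : x * x ∈ Multiset.map (fun z => z * z) s := Multiset.mem_map.2 ⟨x, hx, rfl⟩
      have hxx : x * x ≤ 0 := le_trans (Multiset.single_le_sum (fun y _ => Nat.zero_le y) _ hmem') hP
      have : x = 0 := mul_self_eq_zero.1 (Nat.le_zero.1 hxx)
      omega
    rw [← balanced_eq s this]
  | succ P ih =>
    intro i s hP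
    by_cases hbal : ∀ x ∈ s, ∀ y ∈ s, x ≤ y + 1
    · rw [← balanced_eq s hbal]
    · push_neg at hbal
      obtain ⟨x, hx, y, hy, hxy⟩ := hbal
      have hne : y ≠ x := by omega
      have hy' : y ∈ s.erase x := Multiset.mem_erase_of_ne hne |>.2 hy
      set t := (s.erase x).erase y with htdef
      have hs1 : s = x ::ₘ y ::ₘ t := by
        rw [htdef, Multiset.cons_erase hy', Multiset.cons_erase hx]
      set s2 := (x-1) ::ₘ (y+1) ::ₘ t with hs2def
      have hsum2 : s2.sum = s.sum := by rw [hs1, hs2def]; simp; omega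
      have hcard2 : Multiset.card s2 = Multiset.card s := by rw [hs1, hs2def]; simp
      have hpot : (s2.map (fun x => x*x)).sum ≤ P := by
        have h1 : (s.map (fun x => x*x)).sum = x*x + y*y + (t.map (fun x => x*x)).sum := by
          rw [hs1]; simp; ring
        have h2 : (s2.map (fun x => x*x)).sum = (x-1)*(x-1) + (y+1)*(y+1) + (t.map (fun x => x*x)).sum := by
          rw [hs2def]; simp; ring
        have : (x-1)*(x-1) + (y+1)*(y+1) < x*x + y*y := by
          obtain ⟨c, rfl⟩ : ∃ c, x = y + 2 + c := ⟨x - (y+2), by omega⟩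
          have : y + 2 + c - 1 = y + 1 + c := by omega
          rw [this]; nlinarith
        omega
      calc eM i s = eM i (x ::ₘ y ::ₘ t) := by rw [← hs1]
        _ ≤ eM i ((x-1) ::ₘ (y+1) ::ₘ t) := eM_swap i x y t (by omega)
        _ ≤ eM i (bal s2.sum (Multiset.card s2)) := ih i s2 hpot
        _ = eM i (bal s.sum (Multiset.card s)) := by rw [hsum2, hcard2]

lemma eM_le_bal (i : ℕ) (s : Multiset ℕ) : eM i s ≤ eM i (bal s.sum (Multiset.card s)) :=
  eM_le_bal_aux _ i s le_rfl


variable {V : Type*} [Fintype V] [DecidableEq V]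

def colorful (ρ : V → ℕ) (i : ℕ) (T : Finset ℕ) : Finset (Finset V) :=
  Finset.univ.filter (fun S : Finset V => S.card = i ∧ (∀ x ∈ S, ρ x ∈ T) ∧
      (∀ x ∈ S, ∀ y ∈ S, ρ x = ρ y → x = y))

lemma count_colorful (ρ : V → ℕ) (T : Finset ℕ) (i : ℕ) :
    (colorful ρ i T).card
      = eM i (T.val.map (fun j => (Finset.univ.filter (fun x => ρ x = j)).card)) := by
  induction T using Finset.induction_on generalizing i with
  | empty =>
    match i with
    | 0 =>
      have h : colorful ρ 0 (∅ : Finset ℕ) = {∅} := by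
        ext S
        simp [colorful, Finset.card_eq_zero, Finset.eq_empty_iff_forall_notMem]
        intro h x hx
        exact (h x hx).elim
      rw [h]; simp
    | (i+1) =>
      have h : colorful ρ (i+1) (∅ : Finset ℕ) = ∅ := by
        rw [Finset.eq_empty_iff_forall_notMem]
        intro S hS
        simp only [colorful, Finset.mem_filter] at hS
        obtain ⟨-, hcard, hcol, -⟩ := hS
        obtain ⟨x, hx⟩ := Finset.card_pos.1 (by omega : 0 < S.card)
        exact absurd (hcol x hx) (by simp)
      rw [h]; simp
  | @insert j T hj ih =>
    have hval : (insert j T).val.map (fun j => (Finset.univ.filter (fun x => ρ x = j)).card)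
        = (Finset.univ.filter (fun x => ρ x = j)).card ::ₘ
          T.val.map (fun j => (Finset.univ.filter (fun x => ρ x = j)).card) := by
      rw [Finset.insert_val, Multiset.ndinsert_of_notMem hj, Multiset.map_cons]
    rw [hval]
    match i with
    | 0 =>
      have h : colorful ρ 0 (insert j T) = {∅} := by
        ext S
        simp only [colorful, Finset.mem_filter, Finset.mem_univ, true_and,
          Finset.card_eq_zero, Finset.mem_singleton]
        constructor
        · rintro ⟨rfl, -⟩; rfl
        · rintro rfl; simp
      rw [h]; simp
    | (i+1) =>
      rw [eM_cons, ← ih, ← ih]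
      -- split by whether S contains an element of color j
      have hsplit : ((colorful ρ (i+1) (insert j T)).filter
            (fun S => ∀ x ∈ S, ρ x ≠ j)).card
          + ((colorful ρ (i+1) (insert j T)).filter
            (fun S => ¬ ∀ x ∈ S, ρ x ≠ j)).card
          = (colorful ρ (i+1) (insert j T)).card :=
        Finset.card_filter_add_card_filter_not _
      rw [← hsplit]
      have hA : (colorful ρ (i+1) (insert j T)).filter (fun S => ∀ x ∈ S, ρ x ≠ j)
          = colorful ρ (i+1) T := by
        ext S
        simp only [colorful, Finset.mem_filter, Finset.mem_univ, true_and]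
        constructor
        · rintro ⟨⟨hcard, hcol, hinj⟩, hnoj⟩
          refine ⟨hcard, fun x hx => ?_, hinj⟩
          have := hcol x hx
          rw [Finset.mem_insert] at this
          rcases this with h | h
          · exact absurd h (hnoj x hx)
          · exact h
        · rintro ⟨hcard, hcol, hinj⟩
          exact ⟨⟨hcard, fun x hx => Finset.mem_insert_of_mem (hcol x hx), hinj⟩,
            fun x hx hxj => hj (hxj ▸ hcol x hx)⟩
      have hB : ((colorful ρ (i+1) (insert j T)).filter
            (fun S => ¬ ∀ x ∈ S, ρ x ≠ j)).card
          = (Finset.univ.filter (fun x => ρ x = j)).card * (colorful ρ i T).card := by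
        rw [← Finset.card_product]
        symm
        apply Finset.card_bij
          (i := fun p _ => insert p.1 p.2)
          (s := (Finset.univ.filter (fun x => ρ x = j)) ×ˢ colorful ρ i T)
        · rintro ⟨x, S'⟩ hp
          rw [Finset.mem_product] at hp
          obtain ⟨hx, hS'⟩ := hp
          rw [Finset.mem_filter] at hx
          have hxj : ρ x = j := hx.2
          simp only [colorful, Finset.mem_filter, Finset.mem_univ, true_and] at hS' ⊢
          obtain ⟨hcard, hcol, hinj⟩ := hS'
          have hxS' : x ∉ S' := fun h => hj (hxj ▸ hcol x h)
          refine ⟨⟨?_, ?_, ?_⟩, ?_⟩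
          · rw [Finset.card_insert_of_notMem hxS', hcard]
          · intro y hy
            rcases Finset.mem_insert.1 hy with hy1 | hy2
            · rw [hy1, hxj]; exact Finset.mem_insert_self _ _
            · exact Finset.mem_insert_of_mem (hcol y hy2)
          · intro y hy z hz hyz
            rcases Finset.mem_insert.1 hy with hy1 | hy2
            · rcases Finset.mem_insert.1 hz with hz1 | hz2
              · rw [hy1, hz1]
              · exfalso; apply hj
                have hzT : ρ z ∈ T := hcol z hz2
                rwa [← hyz, hy1, hxj] at hzT
            · rcases Finset.mem_insert.1 hz with hz1 | hz2
              · exfalso; apply hj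
                have hyT : ρ y ∈ T := hcol y hy2
                rwa [hyz, hz1, hxj] at hyT
              · exact hinj y hy2 z hz2 hyz
          · push_neg
            exact ⟨x, Finset.mem_insert_self _ _, hxj⟩
        · rintro ⟨x, S'⟩ hp ⟨y, S''⟩ hq heq
          rw [Finset.mem_product, Finset.mem_filter] at hp hq
          obtain ⟨⟨-, hxj⟩, hS'⟩ := hp
          obtain ⟨⟨-, hyj⟩, hS''⟩ := hq
          simp only [colorful, Finset.mem_filter, Finset.mem_univ, true_and] at hS' hS''
          have hxS' : x ∉ S' := fun h => hj (hxj ▸ hS'.2.1 x h)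
          have hyS'' : y ∉ S'' := fun h => hj (hyj ▸ hS''.2.1 y h)
          have hxy : x = y := by
            have hy' : y ∈ insert x S' := heq ▸ Finset.mem_insert_self y S''
            rcases Finset.mem_insert.1 hy' with h | h
            · exact h.symm
            · exact absurd (hyj ▸ hS'.2.1 y h) hj
          subst hxy
          have : S' = S'' := by
            have := congrArg (fun s => Finset.erase s x) heq
            simpa [Finset.erase_insert hxS', Finset.erase_insert hyS''] using this
          simp [this]
        · intro S hS
          rw [Finset.mem_filter] at hS
          obtain ⟨hS, hex⟩ := hS
          push_neg at hex
          obtain ⟨x, hxS, hxj⟩ := hex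
          simp only [colorful, Finset.mem_filter, Finset.mem_univ, true_and] at hS
          obtain ⟨hcard, hcol, hinj⟩ := hS
          refine ⟨⟨x, S.erase x⟩, ?_, ?_⟩
          · rw [Finset.mem_product, Finset.mem_filter]
            refine ⟨⟨Finset.mem_univ _, hxj⟩, ?_⟩
            simp only [colorful, Finset.mem_filter, Finset.mem_univ, true_and]
            refine ⟨?_, ?_, ?_⟩
            · rw [Finset.card_erase_of_mem hxS, hcard]
              omega
            · intro y hy
              have hyS := Finset.mem_of_mem_erase hy
              have hyx := Finset.ne_of_mem_erase hy
              rcases Finset.mem_insert.1 (hcol y hyS) with h | h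
              · exact absurd (hinj y hyS x hxS (h.trans hxj.symm)) hyx
              · exact h
            · intro y hy z hz hyz
              exact hinj y (Finset.mem_of_mem_erase hy) z (Finset.mem_of_mem_erase hz) hyz
          · exact Finset.insert_erase hxS
      rw [hA, hB]


lemma range_mod_card (r j : ℕ) (hr : 0 < r) (hj : j < r) :
    ∀ n, ((Finset.range n).filter (fun x => x % r = j)).card
      = n / r + if j < n % r then 1 else 0 := by
  intro n
  induction n with
  | zero => simp
  | succ n ih =>
    rw [Finset.range_add_one, Finset.filter_insert]
    have h2 := Nat.div_add_mod n r
    have hlt : n % r < r := Nat.mod_lt _ hr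
    by_cases hc : n % r + 1 < r
    · have hmod : (n+1) % r = n % r + 1 := by
        conv_lhs => rw [← h2, Nat.add_assoc]
        rw [Nat.mul_add_mod, Nat.mod_eq_of_lt hc]
      have hdiv : (n+1) / r = n / r := by
        conv_lhs => rw [← h2, Nat.add_assoc]
        rw [Nat.mul_add_div hr, Nat.div_eq_of_lt hc, Nat.add_zero]
      rw [hmod, hdiv]
      by_cases hnj : n % r = j
      · rw [if_pos hnj, Finset.card_insert_of_notMem (by simp), ih]
        split_ifs <;> omega
      · rw [if_neg hnj, ih]
        split_ifs <;> omega
    · have hre : n % r + 1 = r := by omega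
      have hmod : (n+1) % r = 0 := by
        conv_lhs => rw [← h2, Nat.add_assoc, hre]
        rw [Nat.mul_add_mod, Nat.mod_self]
      have hdiv : (n+1) / r = n / r + 1 := by
        conv_lhs => rw [← h2, Nat.add_assoc, hre]
        rw [Nat.mul_add_div hr, Nat.div_self hr]
      rw [hmod, hdiv]
      by_cases hnj : n % r = j
      · rw [if_pos hnj, Finset.card_insert_of_notMem (by simp), ih]
        split_ifs <;> omega
      · rw [if_neg hnj, ih]
        split_ifs <;> omega

lemma fin_filter_card (n : ℕ) (p : ℕ → Prop) [DecidablePred p] :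
    (Finset.univ.filter (fun x : Fin n => p x.val)).card
      = ((Finset.range n).filter p).card := by
  apply Finset.card_bij (i := fun (x : Fin n) _ => (x : ℕ))
  · intro x hx
    rw [Finset.mem_filter] at hx ⊢
    exact ⟨Finset.mem_range.2 x.isLt, hx.2⟩
  · intro x _ y _ h
    exact Fin.val_injective h
  · intro x hx
    rw [Finset.mem_filter, Finset.mem_range] at hx
    exact ⟨⟨x, hx.1⟩, by simp [hx.2], rfl⟩

lemma fibers_eq_bal (n r : ℕ) (hr : 0 < r) :
    (Finset.range r).val.map
      (fun j => (Finset.univ.filter (fun x : Fin n => (x : ℕ) % r = j)).card)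
      = bal n r := by
  have hk : n % r < r := Nat.mod_lt _ hr
  have hf : ∀ j, j < r → (Finset.univ.filter (fun x : Fin n => (x : ℕ) % r = j)).card
      = n / r + if j < n % r then 1 else 0 := fun j hj => by
    rw [fin_filter_card n (fun x => x % r = j), range_mod_card r j hr hj n]
  have hsplit : r = n % r + (r - n % r) := by omega
  rw [Finset.range_val]
  conv_lhs => rw [show Multiset.range r = Multiset.range (n % r + (r - n % r)) from by
    rw [← hsplit]]
  rw [Multiset.range_add, Multiset.map_add, Multiset.map_map]
  unfold bal
  congr 1
  · rw [Multiset.eq_replicate]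
    refine ⟨by simp, fun b hb => ?_⟩
    rw [Multiset.mem_map] at hb
    obtain ⟨j, hj, rfl⟩ := hb
    rw [Multiset.mem_range] at hj
    rw [hf j (by omega), if_pos (by omega)]
  · rw [Multiset.eq_replicate]
    refine ⟨by simp, fun b hb => ?_⟩
    rw [Multiset.mem_map] at hb
    obtain ⟨j, hj, rfl⟩ := hb
    rw [Multiset.mem_range] at hj
    simp only [Function.comp_apply]
    rw [hf _ (by omega), if_neg (by omega)]
    omega


lemma empty_of_no_one_clique (G : SimpleGraph V) (A : Finset V)
    (h : ¬ ∃ K : Finset V, G.IsNClique 1 K ∧ K ⊆ A) : A = ∅ := by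
  by_contra hA
  obtain ⟨x, hx⟩ := Finset.nonempty_iff_ne_empty.2 hA
  exact h ⟨{x}, SimpleGraph.isNClique_singleton.2 rfl, by simpa⟩

lemma zero_clique_card (G : SimpleGraph V) [DecidableRel G.Adj] (A : Finset V) :
    ((G.cliqueFinset 0).filter (· ⊆ A)).card = 1 := by
  have h : (G.cliqueFinset 0).filter (· ⊆ A) = {∅} := by
    ext K
    simp [SimpleGraph.mem_cliqueFinset_iff, SimpleGraph.isNClique_zero]
    rintro rfl
    exact Finset.empty_subset _
  rw [h, Finset.card_singleton]

lemma succ_clique_empty (G : SimpleGraph V) [DecidableRel G.Adj] (i : ℕ) :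
    ((G.cliqueFinset (i+1)).filter (· ⊆ (∅ : Finset V))).card = 0 := by
  rw [Finset.card_eq_zero, Finset.eq_empty_iff_forall_notMem]
  intro K hK
  rw [Finset.mem_filter, Finset.subset_empty, SimpleGraph.mem_cliqueFinset_iff] at hK
  obtain ⟨h1, rfl⟩ := hK
  simpa using h1.2

lemma erase_card (G : SimpleGraph V) [DecidableRel G.Adj] (A : Finset V) (u : V) (huA : u ∈ A)
    (i : ℕ) :
    ((G.cliqueFinset (i+1)).filter (fun K => u ∈ K ∧ K ⊆ A)).card
      = ((G.cliqueFinset i).filter (· ⊆ G.neighborFinset u ∩ A)).card := by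
  refine Finset.card_bij' (fun K _ => K.erase u) (fun K' _ => insert u K') ?hi ?hj ?left ?right
  case hi =>
    intro K hK
    rw [Finset.mem_filter, SimpleGraph.mem_cliqueFinset_iff] at hK
    obtain ⟨⟨hcl, hcard⟩, huK, hKA⟩ := hK
    rw [Finset.mem_filter, SimpleGraph.mem_cliqueFinset_iff]
    refine ⟨⟨hcl.subset (Finset.erase_subset _ _), ?_⟩, ?_⟩
    · rw [Finset.card_erase_of_mem huK, hcard]; omega
    · intro x hx
      have hxu := Finset.ne_of_mem_erase hx
      have hxK := Finset.mem_of_mem_erase hx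
      rw [Finset.mem_inter, SimpleGraph.mem_neighborFinset]
      exact ⟨(hcl huK hxK (Ne.symm hxu)), hKA hxK⟩
  case hj =>
    intro K' hK'
    rw [Finset.mem_filter, SimpleGraph.mem_cliqueFinset_iff] at hK'
    obtain ⟨hcl, hK'sub⟩ := hK'
    have hall : ∀ b ∈ K', G.Adj u b := fun b hb => by
      have := hK'sub hb
      rw [Finset.mem_inter, SimpleGraph.mem_neighborFinset] at this
      exact this.1
    rw [Finset.mem_filter, SimpleGraph.mem_cliqueFinset_iff]
    refine ⟨hcl.insert hall, Finset.mem_insert_self _ _, ?_⟩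
    intro x hx
    rcases Finset.mem_insert.1 hx with rfl | hx
    · exact huA
    · exact (Finset.mem_inter.1 (hK'sub hx)).2
  case left =>
    intro K hK
    rw [Finset.mem_filter] at hK
    exact Finset.insert_erase hK.2.1
  case right =>
    intro K' hK'
    rw [Finset.mem_filter] at hK'
    have hu : u ∉ K' := fun h => by
      have := Finset.mem_inter.1 (hK'.2 h)
      exact G.notMem_neighborFinset_self u this.1
    exact Finset.erase_insert hu


lemma main_lemma : ∀ (r : ℕ) {V : Type*} [Fintype V] [DecidableEq V] (G : SimpleGraph V)
    [DecidableRel G.Adj] (A : Finset V),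
    (¬ ∃ K : Finset V, G.IsNClique (r+1) K ∧ K ⊆ A) → ∀ i,
    ((G.cliqueFinset i).filter (· ⊆ A)).card ≤ eM i (bal A.card r) := by
  intro r
  induction r with
  | zero =>
    intro V _ _ G _ A hA i
    have hAe : A = ∅ := empty_of_no_one_clique G A hA
    subst hAe
    match i with
    | 0 => rw [zero_clique_card]; simp [eM]
    | (i+1) => rw [succ_clique_empty]; exact Nat.zero_le _
  | succ r ih =>
    intro V _ _ G _ A hA i
    match i with
    | 0 => rw [zero_clique_card]; simp
    | (i+1) =>
      rcases eq_or_ne A ∅ with rfl | hAne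
      · rw [succ_clique_empty]; exact Nat.zero_le _
      · obtain ⟨v, hv, hvmax⟩ := Finset.exists_max_image A
          (fun u => ((G.cliqueFinset i).filter (· ⊆ G.neighborFinset u ∩ A)).card)
          (Finset.nonempty_iff_ne_empty.2 hAne)
        set A' := G.neighborFinset v ∩ A with hA'def
        have hA'sub : A' ⊆ A := Finset.inter_subset_right
        have hdle : A'.card ≤ A.card := Finset.card_le_card hA'sub
        -- A' has no (r+1)-clique
        have hA'free : ¬ ∃ K : Finset V, G.IsNClique (r+1) K ∧ K ⊆ A' := by
          rintro ⟨K, hK, hKA'⟩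
          apply hA
          refine ⟨insert v K, hK.insert (fun b hb => ?_), fun x hx => ?_⟩
          · have hb' := hKA' hb
            rw [hA'def, Finset.mem_inter, SimpleGraph.mem_neighborFinset] at hb'
            exact hb'.1
          · rcases Finset.mem_insert.1 hx with rfl | hx
            · exact hv
            · exact hA'sub (hKA' hx)
        -- bal facts for possibly-zero r
        have hr0 : r = 0 → A' = ∅ := fun hr => by
          apply empty_of_no_one_clique G A'
          subst hr
          exact hA'free
        have hbalcard : Multiset.card (bal A'.card r) = r := by
          rcases Nat.eq_zero_or_pos r with rfl | hr
          · rw [hr0 rfl]; simp [bal]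
          · exact bal_card _ _ hr.ne'
        have hbalsum : (bal A'.card r).sum = A'.card := by
          rcases Nat.eq_zero_or_pos r with rfl | hr
          · rw [hr0 rfl]; simp [bal]
          · exact bal_sum _ _ hr.ne'
        -- decomposition
        have hdecomp : (G.cliqueFinset (i+1)).filter (· ⊆ A) ⊆
            ((G.cliqueFinset (i+1)).filter (· ⊆ A')) ∪
            (A \ A').biUnion (fun u => (G.cliqueFinset (i+1)).filter (fun K => u ∈ K ∧ K ⊆ A)) := by
          intro K hK
          rw [Finset.mem_filter] at hK
          by_cases h : K ⊆ A'
          · exact Finset.mem_union_left _ (Finset.mem_filter.2 ⟨hK.1, h⟩)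
          · obtain ⟨u, huK, huA'⟩ := Finset.not_subset.1 h
            exact Finset.mem_union_right _ (Finset.mem_biUnion.2
              ⟨u, Finset.mem_sdiff.2 ⟨hK.2 huK, huA'⟩,
                Finset.mem_filter.2 ⟨hK.1, huK, hK.2⟩⟩)
        calc ((G.cliqueFinset (i+1)).filter (· ⊆ A)).card
            ≤ (((G.cliqueFinset (i+1)).filter (· ⊆ A')) ∪
              (A \ A').biUnion (fun u => (G.cliqueFinset (i+1)).filter
                (fun K => u ∈ K ∧ K ⊆ A))).card := Finset.card_le_card hdecomp
          _ ≤ ((G.cliqueFinset (i+1)).filter (· ⊆ A')).card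
              + ((A \ A').biUnion (fun u => (G.cliqueFinset (i+1)).filter
                (fun K => u ∈ K ∧ K ⊆ A))).card := Finset.card_union_le _ _
          _ ≤ ((G.cliqueFinset (i+1)).filter (· ⊆ A')).card
              + ∑ u ∈ A \ A', ((G.cliqueFinset (i+1)).filter
                (fun K => u ∈ K ∧ K ⊆ A)).card :=
              Nat.add_le_add_left Finset.card_biUnion_le _
          _ ≤ ((G.cliqueFinset (i+1)).filter (· ⊆ A')).card
              + ∑ _u ∈ A \ A', ((G.cliqueFinset i).filter (· ⊆ A')).card := by
              apply Nat.add_le_add_left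
              apply Finset.sum_le_sum
              intro u hu
              have huA : u ∈ A := (Finset.mem_sdiff.1 hu).1
              rw [erase_card G A u huA i]
              exact hvmax u huA
          _ = ((G.cliqueFinset (i+1)).filter (· ⊆ A')).card
              + (A.card - A'.card) * ((G.cliqueFinset i).filter (· ⊆ A')).card := by
              rw [Finset.sum_const, Finset.card_sdiff_of_subset hA'sub, smul_eq_mul]
          _ ≤ eM (i+1) (bal A'.card r) + (A.card - A'.card) * eM i (bal A'.card r) := by
              exact Nat.add_le_add (ih G A' hA'free (i+1))
                (Nat.mul_le_mul_left _ (ih G A' hA'free i))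
          _ = eM (i+1) ((A.card - A'.card) ::ₘ bal A'.card r) := (eM_cons _ _ _).symm
          _ ≤ eM (i+1) (bal A.card (r+1)) := by
              have h := eM_le_bal (i+1) ((A.card - A'.card) ::ₘ bal A'.card r)
              rwa [Multiset.sum_cons, hbalsum, Multiset.card_cons, hbalcard,
                Nat.sub_add_cancel hdle] at h



lemma turan_clique (n r i : ℕ) (hr : 0 < r) :
    (SimpleGraph.turanGraph n r).cliqueFinset i
      = colorful (fun x : Fin n => (x : ℕ) % r) i (Finset.range r) := by
  ext S
  rw [SimpleGraph.mem_cliqueFinset_iff, SimpleGraph.isNClique_iff]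
  simp only [colorful, Finset.mem_filter, Finset.mem_univ, true_and, Finset.mem_range]
  constructor
  · rintro ⟨hclique, hcard⟩
    refine ⟨hcard, fun x _ => Nat.mod_lt _ hr, fun x hx y hy hxy => ?_⟩
    by_contra hne
    exact (hclique (Finset.mem_coe.2 hx) (Finset.mem_coe.2 hy) hne) hxy
  · rintro ⟨hcard, -, hinj⟩
    refine ⟨fun x hx y hy hne => ?_, hcard⟩
    intro heq
    exact hne (hinj x (Finset.mem_coe.1 hx) y (Finset.mem_coe.1 hy) heq)

lemma turan_card (n r i : ℕ) (hr : 0 < r) :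
    ((SimpleGraph.turanGraph n r).cliqueFinset i).card = eM i (bal n r) := by
  rw [turan_clique n r i hr, count_colorful, fibers_eq_bal n r hr]

lemma clique_zero (G : SimpleGraph V) [DecidableRel G.Adj] :
    G.cliqueFinset 0 = {∅} := by
  ext S
  rw [SimpleGraph.mem_cliqueFinset_iff, SimpleGraph.isNClique_zero, Finset.mem_singleton]

end ZykovAux

/-- Zykov's bound: if `G` is a finite simple graph on `n` vertices with no clique on `r+1`
vertices, then for every `i` the number of `i`-vertex cliques of `G` is at most the number
of `i`-vertex cliques of the Turán graph `T_{n,r}`. -/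
theorem card_cliques_le_turan {V : Type*} [Fintype V] [DecidableEq V]
    (G : SimpleGraph V) [DecidableRel G.Adj] (n r : ℕ)
    (hn : Fintype.card V = n) (hG : G.CliqueFree (r + 1)) (i : ℕ) :
    (G.cliqueFinset i).card ≤ ((SimpleGraph.turanGraph n r).cliqueFinset i).card := by
  subst hn
  rcases Nat.eq_zero_or_pos r with rfl | hr
  · match i with
    | 0 =>
      rw [ZykovAux.clique_zero, ZykovAux.clique_zero]
      exact le_refl _
    | (i+1) =>
      have hVempty : IsEmpty V := by
        by_contra h
        rw [not_isEmpty_iff] at h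
        obtain ⟨x⟩ := h
        exact hG {x} (SimpleGraph.isNClique_singleton.2 rfl)
      have hempty : G.cliqueFinset (i+1) = ∅ := by
        rw [Finset.eq_empty_iff_forall_notMem]
        intro K hK
        rw [SimpleGraph.mem_cliqueFinset_iff] at hK
        have : K = ∅ := Finset.eq_empty_of_isEmpty K
        rw [this] at hK
        simpa using hK.2
      rw [hempty]
      exact Nat.zero_le _
  · calc (G.cliqueFinset i).card
        = ((G.cliqueFinset i).filter (· ⊆ (Finset.univ : Finset V))).card := by
          rw [Finset.filter_true_of_mem (fun K _ => Finset.subset_univ K)]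
      _ ≤ ZykovAux.eM i (ZykovAux.bal (Finset.univ : Finset V).card r) :=
          ZykovAux.main_lemma r G Finset.univ
            (by rintro ⟨K, hK, -⟩; exact hG K hK) i
      _ = ZykovAux.eM i (ZykovAux.bal (Fintype.card V) r) := by rw [Finset.card_univ]
      _ = ((SimpleGraph.turanGraph (Fintype.card V) r).cliqueFinset i).card :=
          (ZykovAux.turan_card (Fintype.card V) r i hr).symm
end
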